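/- arXiv:math/0302138 — 6 statements merged into one kernel-verified Lean document; each statement's English description precedes it below -/
import Mathlib

section
/- Let r ≥ 1, let l₁, …, l_r be pairwise distinct primes with each l_i ≥ 5, and let e₁, …, e_r ≥ 1 be integers. Set G := G_{l₁,e₁} × ⋯ × G_{l_r,e_r}. Let n ≥ 2 be an integer and let H be a subgroup of Gⁿ such that for every pair of distinct indices s, t ∈ {1, …, n} the projection Gⁿ → G² onto the s-th and t-th coordinates maps H surjectively onto G². Then H = Gⁿ. -/
open Matrix

/-- The subgroup `{±1}` of `SL₂(ℤ/Nℤ)`, i.e. the subgroup generated by `-1`. -/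
def pmOne (N : ℕ) : Subgroup (SpecialLinearGroup (Fin 2) (ZMod N)) :=
  Subgroup.zpowers (-1)

instance pmOne_normal (N : ℕ) : (pmOne N).Normal := by
  constructor
  intro x hx g
  obtain ⟨k, rfl⟩ := hx
  refine ⟨k, ?_⟩
  have hc : Commute ((-1 : SpecialLinearGroup (Fin 2) (ZMod N)) ^ k) g := by
    apply Commute.zpow_left
    show (-1) * g = g * (-1)
    rw [neg_one_mul, mul_neg_one]
  rw [← hc.eq, mul_assoc, mul_inv_cancel, mul_one]

/-- `G_{l,e} = SL₂(ℤ/l^eℤ)/{±I}`, the quotient of `SL₂(ℤ/l^eℤ)` by its central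
subgroup `{I, -I}`. -/
def Gle (l e : ℕ) : Type :=
  SpecialLinearGroup (Fin 2) (ZMod (l ^ e)) ⧸ pmOne (l ^ e)

instance (l e : ℕ) : Group (Gle l e) :=
  inferInstanceAs (Group (SpecialLinearGroup (Fin 2) (ZMod (l ^ e)) ⧸ pmOne (l ^ e)))

set_option linter.unusedSectionVars false

open scoped commutatorElement

section KeyLemma
variable {G : Type*} [Group G]

private lemma pair_surj_to_top (hG : commutator G = ⊤) :
    ∀ n : ℕ, 2 ≤ n → ∀ H : Subgroup (Fin n → G),
      (∀ s t : Fin n, s ≠ t → ∀ a b : G, ∃ h ∈ H, h s = a ∧ h t = b) → H = ⊤ := by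
  intro n hn
  induction n, hn using Nat.le_induction with
  | base =>
    intro H hp
    ext f
    simp only [Subgroup.mem_top, iff_true]
    obtain ⟨h, hH, h0, h1⟩ := hp 0 1 (by decide) (f 0) (f 1)
    have hf : f = h := by
      funext i
      fin_cases i <;> simp [h0, h1]
    rw [hf]; exact hH
  | succ n hn IH =>
    intro H hp
    set t : Fin (n + 1) := Fin.last n with ht
    have h0t : (0 : Fin (n + 1)) ≠ t := by
      rw [ht, Fin.ne_iff_vne]
      simp only [Fin.val_zero, Fin.val_last]
      omega
    let π : (Fin (n + 1) → G) →* (Fin n → G) :=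
      { toFun := fun h i => h i.castSucc
        map_one' := rfl
        map_mul' := fun _ _ => rfl }
    have hsurj : ∀ g : Fin n → G, ∃ h ∈ H, ∀ i : Fin n, h i.castSucc = g i := by
      have htop : Subgroup.map π H = ⊤ := by
        apply IH
        intro s s' hss' a b
        obtain ⟨h, hH, ha, hb⟩ := hp s.castSucc s'.castSucc
          (fun hc => hss' (Fin.castSucc_injective _ hc)) a b
        exact ⟨π h, ⟨h, hH, rfl⟩, ha, hb⟩
      intro g
      have hg : g ∈ Subgroup.map π H := htop ▸ Subgroup.mem_top g
      obtain ⟨h, hH, hh⟩ := hg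
      exact ⟨h, hH, fun i => congrFun hh i⟩
    have hclt : ∀ i : Fin n, i.castSucc ≠ t := fun i => (Fin.castSucc_lt_last i).ne
    set N : Subgroup G := H.comap (MonoidHom.mulSingle (fun _ : Fin (n + 1) => G) t) with hN
    have hmemN : ∀ g : G, g ∈ N ↔ Pi.mulSingle t g ∈ H := fun g => Iff.rfl
    have hsingle : ∀ h : Fin (n + 1) → G, (∀ i : Fin n, h i.castSucc = 1) →
        h = Pi.mulSingle t (h t) := by
      intro h hh
      funext u
      refine Fin.lastCases ?_ ?_ u
      · simp [ht]
      · intro i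
        simp [Pi.mulSingle_eq_of_ne (hclt i), hh i]
    have hNnormal : N.Normal := by
      constructor
      intro g hg x
      obtain ⟨h, hH, -, hht⟩ := hp 0 t h0t x x
      have heq : Pi.mulSingle t (x * g * x⁻¹) = h * Pi.mulSingle t g * h⁻¹ := by
        funext u
        by_cases hu : u = t
        · subst hu; simp [hht]
        · simp [Pi.mulSingle_eq_of_ne hu]
      rw [hmemN, heq]
      exact H.mul_mem (H.mul_mem hH hg) (H.inv_mem hH)
    haveI := hNnormal
    have hWD : ∀ h ∈ H, ∀ k ∈ H, (∀ i : Fin n, h i.castSucc = k i.castSucc) →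
        (QuotientGroup.mk (h t) : G ⧸ N) = QuotientGroup.mk (k t) := by
      intro h hH k hK hhk
      symm
      rw [QuotientGroup.eq]
      rw [show (k t)⁻¹ * h t = (k⁻¹ * h) t from rfl] at *
      rw [hmemN, ← hsingle (k⁻¹ * h) (fun i => by
        simp [Pi.mul_apply, Pi.inv_apply, hhk i])]
      exact H.mul_mem (H.inv_mem hK) hH
    have hC : ∀ s : Fin n, ∀ h ∈ H, (∀ u : Fin n, u ≠ s → h u.castSucc = 1) →
        ∀ k ∈ H, Commute (QuotientGroup.mk (h t) : G ⧸ N) (QuotientGroup.mk (k t)) := by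
      intro s h hH hs k hK
      obtain ⟨k', hK', hk's, hk't⟩ := hp s.castSucc t (hclt s) 1 (k t)
      have key : (QuotientGroup.mk ((h * k') t) : G ⧸ N) = QuotientGroup.mk ((k' * h) t) := by
        refine hWD _ (H.mul_mem hH hK') _ (H.mul_mem hK' hH) ?_
        intro i
        by_cases hi : i = s
        · subst hi; simp [Pi.mul_apply, hk's]
        · simp [Pi.mul_apply, hs i hi]
      have hcomm' : Commute (QuotientGroup.mk (h t) : G ⧸ N) (QuotientGroup.mk (k' t)) := by
        unfold Commute SemiconjBy
        rw [← QuotientGroup.mk_mul, ← QuotientGroup.mk_mul]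
        exact key
      rwa [hk't] at hcomm'
    have hcomm : ∀ S : Finset (Fin n), ∀ h ∈ H, (∀ u : Fin n, u ∉ S → h u.castSucc = 1) →
        ∀ k ∈ H, Commute (QuotientGroup.mk (h t) : G ⧸ N) (QuotientGroup.mk (k t)) := by
      intro S
      induction S using Finset.induction_on with
      | empty =>
        intro h hH hh k hK
        have h1 : h t ∈ N := by
          rw [hmemN, ← hsingle h (fun i => hh i (Finset.notMem_empty i))]
          exact hH
        rw [(QuotientGroup.eq_one_iff _).mpr h1]
        exact Commute.one_left _
      | @insert s S hsS IH2 =>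
        intro h hH hh k hK
        obtain ⟨h₁, hH₁, hh₁⟩ := hsurj (Pi.mulSingle s (h s.castSucc))
        have hh₂ : ∀ u : Fin n, u ∉ S → (h₁⁻¹ * h) u.castSucc = 1 := by
          intro u hu
          by_cases hus : u = s
          · subst hus
            simp [Pi.mul_apply, Pi.inv_apply, hh₁ u]
          · have : h u.castSucc = 1 := hh u (by simp [Finset.mem_insert, hus, hu])
            simp [Pi.mul_apply, Pi.inv_apply, hh₁ u, Pi.mulSingle_eq_of_ne hus, this]
        have c2 := IH2 (h₁⁻¹ * h) (H.mul_mem (H.inv_mem hH₁) hH) hh₂ k hK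
        have c1 := hC s h₁ hH₁ (fun u hu => by
          rw [hh₁ u]; exact Pi.mulSingle_eq_of_ne hu _) k hK
        have hsplit : (QuotientGroup.mk (h t) : G ⧸ N)
            = QuotientGroup.mk (h₁ t) * QuotientGroup.mk ((h₁⁻¹ * h) t) := by
          rw [← QuotientGroup.mk_mul]
          congr 1
          simp [Pi.mul_apply, Pi.inv_apply]
        rw [hsplit]
        exact Commute.mul_left c1 c2
    have hNtop : N = ⊤ := by
      rw [eq_top_iff, ← hG, commutator_def, Subgroup.commutator_le]
      intro a _ b _
      obtain ⟨h, hH, -, hat⟩ := hp 0 t h0t 1 a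
      obtain ⟨k, hK, -, hbt⟩ := hp 0 t h0t 1 b
      have hc := hcomm Finset.univ h hH (fun u hu => absurd (Finset.mem_univ u) hu) k hK
      rw [hat, hbt] at hc
      apply (QuotientGroup.eq_one_iff _).mp
      rw [show (QuotientGroup.mk ⁅a, b⁆ : G ⧸ N)
          = ⁅(QuotientGroup.mk a : G ⧸ N), QuotientGroup.mk b⁆ from
        map_commutatorElement (QuotientGroup.mk' N) a b]
      exact commutatorElement_eq_one_iff_commute.mpr hc
    ext f
    simp only [Subgroup.mem_top, iff_true]
    obtain ⟨h, hH, hh⟩ := hsurj (fun i => f i.castSucc)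
    have h2 : Pi.mulSingle t ((h t)⁻¹ * f t) ∈ H := by
      rw [← hmemN, hNtop]; trivial
    have hf : f = h * Pi.mulSingle t ((h t)⁻¹ * f t) := by
      funext u
      refine Fin.lastCases ?_ ?_ u
      · simp [ht]
      · intro i
        simp [Pi.mul_apply, Pi.mulSingle_eq_of_ne (hclt i), hh i]
    rw [hf]
    exact H.mul_mem hH h2

end KeyLemma

section SL2
variable {R : Type*} [CommRing R]

private lemma sl2_det (a b c d : R) (h : a * d - b * c = 1) :
    Matrix.det !![a, b; c, d] = 1 := by rwa [Matrix.det_fin_two_of]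

private lemma mat2_eq {a b c d a' b' c' d' : R} (h1 : a = a') (h2 : b = b')
    (h3 : c = c') (h4 : d = d') : !![a, b; c, d] = !![a', b'; c', d'] := by
  rw [h1, h2, h3, h4]

private lemma SL2_commutator_top (h2 : IsUnit (2 : R)) (h3 : IsUnit (3 : R))
    (hloc : ∀ a : R, ¬IsUnit a → IsUnit (1 - a)) :
    commutator (SpecialLinearGroup (Fin 2) R) = ⊤ := by
  obtain ⟨u2, hu2⟩ := h2
  obtain ⟨u3, hu3⟩ := h3
  set v2 : R := ↑u2⁻¹ with hv2def
  set v3 : R := ↑u3⁻¹ with hv3def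
  have hv2 : 2 * v2 = 1 := by rw [← hu2]; exact u2.mul_inv
  have hv3 : 3 * v3 = 1 := by rw [← hu3]; exact u3.mul_inv
  set SL := SpecialLinearGroup (Fin 2) R with hSL
  set K := commutator SL with hK
  let E₁ : R → SL := fun x => ⟨!![1, x; 0, 1], sl2_det _ _ _ _ (by ring)⟩
  let E₂ : R → SL := fun x => ⟨!![1, 0; x, 1], sl2_det _ _ _ _ (by ring)⟩
  let D : SL := ⟨!![2, 0; 0, v2], sl2_det _ _ _ _ (by linear_combination hv2)⟩
  have hmul : ∀ (A B : SL) (a b c d a' b' c' d' : R),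
      (A : Matrix (Fin 2) (Fin 2) R) = !![a, b; c, d] →
      (B : Matrix (Fin 2) (Fin 2) R) = !![a', b'; c', d'] →
      ((A * B : SL) : Matrix (Fin 2) (Fin 2) R)
        = !![a * a' + b * c', a * b' + b * d'; c * a' + d * c', c * b' + d * d'] := by
    intro A B a b c d a' b' c' d' hA hB
    rw [Matrix.SpecialLinearGroup.coe_mul, hA, hB, Matrix.mul_fin_two]
  have hE₁mul : ∀ x y : R, E₁ x * E₁ y = E₁ (x + y) := by
    intro x y
    apply Subtype.ext
    rw [hmul _ _ 1 x 0 1 1 y 0 1 rfl rfl]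
    exact mat2_eq (by ring) (by ring) (by ring) (by ring)
  have hE₁zero : E₁ 0 = 1 := by
    apply Subtype.ext
    rw [Matrix.SpecialLinearGroup.coe_one, Matrix.one_fin_two]
  -- E₁ as commutators
  have hDcomm : ∀ y : R, ⁅D, E₁ y⁆ = E₁ (3 * y) := by
    intro y
    have key : D * E₁ y = E₁ (3 * y) * (E₁ y * D) := by
      apply Subtype.ext
      rw [hmul D (E₁ y) 2 0 0 v2 1 y 0 1 rfl rfl,
        hmul (E₁ (3 * y)) (E₁ y * D) 1 (3 * y) 0 1 (1 * 2 + y * 0) (1 * 0 + y * v2)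
          (0 * 2 + 1 * 0) (0 * 0 + 1 * v2)
          rfl (hmul (E₁ y) D 1 y 0 1 2 0 0 v2 rfl rfl)]
      exact mat2_eq (by ring) (by linear_combination (-2 * y) * hv2) (by ring) (by ring)
    rw [commutatorElement_def, key]
    group
  have hD2comm : ∀ y : R, ⁅D, E₂ y⁆ = E₂ ((v2 * y - 2 * y) * v2) := by
    intro y
    have key : D * E₂ y = E₂ ((v2 * y - 2 * y) * v2) * (E₂ y * D) := by
      apply Subtype.ext
      rw [hmul D (E₂ y) 2 0 0 v2 1 0 y 1 rfl rfl,
        hmul (E₂ ((v2 * y - 2 * y) * v2)) (E₂ y * D) 1 0 ((v2 * y - 2 * y) * v2) 1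
          (1 * 2 + 0 * 0) (1 * 0 + 0 * v2) (y * 2 + 1 * 0) (y * 0 + 1 * v2)
          rfl (hmul (E₂ y) D 1 0 y 1 2 0 0 v2 rfl rfl)]
      exact mat2_eq (by ring) (by ring) (by linear_combination (2 * y - v2 * y) * hv2)
        (by ring)
    rw [commutatorElement_def, key]
    group
  have hE₁K : ∀ x : R, E₁ x ∈ K := by
    intro x
    have : E₁ x = ⁅D, E₁ (v3 * x)⁆ := by
      rw [hDcomm]
      congr 1
      linear_combination -x * hv3
    rw [this, hK, commutator_def]
    exact Subgroup.commutator_mem_commutator (Subgroup.mem_top _) (Subgroup.mem_top _)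
  have hE₂K : ∀ x : R, E₂ x ∈ K := by
    intro x
    have : E₂ x = ⁅D, E₂ (-(4 * v3) * x)⁆ := by
      rw [hD2comm]
      congr 1
      -- (v2 * (-(4*v3)*x) - 2 * (-(4*v3)*x)) * v2 = x
      linear_combination (2 * v3 * x * v2 - 3 * v3 * x) * hv2 - x * hv3
    rw [this, hK, commutator_def]
    exact Subgroup.commutator_mem_commutator (Subgroup.mem_top _) (Subgroup.mem_top _)
  -- diagonal matrices
  have hDiagK : ∀ (A : SL) (a w : R), a * w = 1 →
      (A : Matrix (Fin 2) (Fin 2) R) = !![a, 0; 0, w] → A ∈ K := by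
    intro A a w haw hA
    have i1 : ((E₁ 1 * E₂ (-1) : SL) : Matrix (Fin 2) (Fin 2) R) = !![0, 1; -1, 1] := by
      rw [hmul _ _ 1 1 0 1 1 0 (-1) 1 rfl rfl]
      exact mat2_eq (by ring) (by ring) (by ring) (by ring)
    have w1 : ((E₁ 1 * E₂ (-1) * E₁ 1 : SL) : Matrix (Fin 2) (Fin 2) R)
        = !![0, 1; -1, 0] := by
      rw [hmul _ _ 0 1 (-1) 1 1 1 0 1 i1 rfl]
      exact mat2_eq (by ring) (by ring) (by ring) (by ring)
    have ia : ((E₁ a * E₂ (-w) : SL) : Matrix (Fin 2) (Fin 2) R)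
        = !![1 - a * w, a; -w, 1] := by
      rw [hmul _ _ 1 a 0 1 1 0 (-w) 1 rfl rfl]
      exact mat2_eq (by ring) (by ring) (by ring) (by ring)
    have wa : ((E₁ a * E₂ (-w) * E₁ a : SL) : Matrix (Fin 2) (Fin 2) R)
        = !![0, a; -w, 0] := by
      rw [hmul _ _ (1 - a * w) a (-w) 1 1 a 0 1 ia rfl]
      exact mat2_eq (by linear_combination -haw) (by linear_combination -a * haw)
        (by ring) (by linear_combination -haw)
    have hAeq : A = E₁ a * E₂ (-w) * E₁ a * (E₁ 1 * E₂ (-1) * E₁ 1)⁻¹ := by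
      apply eq_mul_inv_of_mul_eq
      apply Subtype.ext
      rw [hmul A _ a 0 0 w 0 1 (-1) 0 hA w1, wa]
      exact mat2_eq (by ring) (by ring) (by ring) (by ring)
    rw [hAeq]
    exact mul_mem (mul_mem (mul_mem (hE₁K a) (hE₂K (-w))) (hE₁K a))
      (inv_mem (mul_mem (mul_mem (hE₁K 1) (hE₂K (-1))) (hE₁K 1)))
  -- matrices with unit top-left entry
  have hunit : ∀ M : SL, IsUnit ((M : Matrix (Fin 2) (Fin 2) R) 0 0) → M ∈ K := by
    intro M hM
    set a : R := (M : Matrix (Fin 2) (Fin 2) R) 0 0 with ha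
    set b : R := (M : Matrix (Fin 2) (Fin 2) R) 0 1 with hb
    set c : R := (M : Matrix (Fin 2) (Fin 2) R) 1 0 with hc
    set d : R := (M : Matrix (Fin 2) (Fin 2) R) 1 1 with hd
    have hdet : a * d - b * c = 1 := by
      have h := M.2
      rwa [Matrix.det_fin_two] at h
    obtain ⟨u, hu⟩ := hM
    set v : R := ↑u⁻¹ with hvdef
    have hav : a * v = 1 := by rw [← hu]; exact u.mul_inv
    have hMeta : (M : Matrix (Fin 2) (Fin 2) R) = !![a, b; c, d] := Matrix.eta_fin_two _
    let Dg : SL := ⟨!![a, 0; 0, v], sl2_det _ _ _ _ (by linear_combination hav)⟩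
    have hDgK : Dg ∈ K := hDiagK Dg a v hav rfl
    have step1 : ((Dg * E₁ (v * b) : SL) : Matrix (Fin 2) (Fin 2) R)
        = !![a, a * (v * b); 0, v] := by
      rw [hmul _ _ a 0 0 v 1 (v * b) 0 1 rfl rfl]
      exact mat2_eq (by ring) (by ring) (by ring) (by ring)
    have step2 : ((E₂ (c * v) * (Dg * E₁ (v * b)) : SL) : Matrix (Fin 2) (Fin 2) R)
        = !![a, b; c, d] := by
      rw [hmul _ _ 1 0 (c * v) 1 a (a * (v * b)) 0 v rfl step1]
      exact mat2_eq (by ring) (by linear_combination b * hav)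
        (by linear_combination c * hav)
        (by linear_combination (c * v * b + d) * hav - v * hdet)
    have hMeq : M = E₂ (c * v) * (Dg * E₁ (v * b)) :=
      Subtype.ext (by rw [step2, hMeta])
    rw [hMeq]
    exact mul_mem (hE₂K _) (mul_mem hDgK (hE₁K _))
  -- general case
  rw [Subgroup.eq_top_iff']
  intro M
  by_cases hM : IsUnit ((M : Matrix (Fin 2) (Fin 2) R) 0 0)
  · exact hunit M hM
  · set a : R := (M : Matrix (Fin 2) (Fin 2) R) 0 0 with ha
    set b : R := (M : Matrix (Fin 2) (Fin 2) R) 0 1 with hb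
    set c : R := (M : Matrix (Fin 2) (Fin 2) R) 1 0 with hc
    set d : R := (M : Matrix (Fin 2) (Fin 2) R) 1 1 with hd
    have hdet : a * d - b * c = 1 := by
      have h := M.2
      rwa [Matrix.det_fin_two] at h
    have hcunit : IsUnit c := by
      have h1 : ¬IsUnit (a * d) := fun h => hM (isUnit_of_mul_isUnit_left h)
      have h2' : IsUnit (1 - a * d) := hloc _ h1
      have h3' : IsUnit (b * c) := by
        rw [show b * c = -(1 - a * d) by linear_combination -hdet]
        exact h2'.neg
      exact isUnit_of_mul_isUnit_right h3'
    obtain ⟨uc, huc⟩ := hcunit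
    set w : R := ↑uc⁻¹ with hwdef
    have hcw : c * w = 1 := by rw [← huc]; exact uc.mul_inv
    set y : R := (a - 1) * w with hy
    have hM2 : IsUnit (((E₁ (-y) * M : SL) : Matrix (Fin 2) (Fin 2) R) 0 0) := by
      have hentry : ((E₁ (-y) * M : SL) : Matrix (Fin 2) (Fin 2) R) 0 0 = 1 := by
        rw [Matrix.SpecialLinearGroup.coe_mul]
        show (!![1, -y; 0, 1] * (M : Matrix (Fin 2) (Fin 2) R)) 0 0 = 1
        rw [Matrix.mul_apply, Fin.sum_univ_two]
        show 1 * a + -y * c = 1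
        linear_combination (1 - a) * hcw
      rw [hentry]
      exact isUnit_one
    have hM2K := hunit _ hM2
    have hMeq : M = E₁ y * (E₁ (-y) * M) := by
      rw [← mul_assoc, hE₁mul, show y + -y = 0 by ring, hE₁zero, one_mul]
    rw [hMeq]
    exact mul_mem (hE₁K y) hM2K

end SL2

section Transfer

private lemma quotient_perfect {G : Type*} [Group G] (K : Subgroup G) [K.Normal]
    (hG : commutator G = ⊤) : commutator (G ⧸ K) = ⊤ := by
  have hs : Function.Surjective (QuotientGroup.mk' K) := QuotientGroup.mk'_surjective K
  rw [eq_top_iff]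
  calc (⊤ : Subgroup (G ⧸ K)) = Subgroup.map (QuotientGroup.mk' K) ⊤ :=
        (Subgroup.map_top_of_surjective _ hs).symm
    _ = Subgroup.map (QuotientGroup.mk' K) (commutator G) := by rw [hG]
    _ = ⁅Subgroup.map (QuotientGroup.mk' K) ⊤, Subgroup.map (QuotientGroup.mk' K) ⊤⁆ :=
        Subgroup.map_commutator ⊤ ⊤ (QuotientGroup.mk' K)
    _ ≤ ⁅(⊤ : Subgroup (G ⧸ K)), ⊤⁆ := Subgroup.commutator_mono le_top le_top
    _ = commutator (G ⧸ K) := (commutator_def _).symm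

private lemma pi_perfect {I : Type*} [Fintype I] [DecidableEq I] {G : I → Type*}
    [∀ i, Group (G i)] (h : ∀ i, commutator (G i) = ⊤) :
    commutator (∀ i, G i) = ⊤ := by
  rw [Subgroup.eq_top_iff']
  have key : ∀ S : Finset I, ∀ f : ∀ i, G i, (∀ i ∉ S, f i = 1) →
      f ∈ commutator (∀ i, G i) := by
    intro S
    induction S using Finset.induction_on with
    | empty =>
      intro f hf
      have : f = 1 := funext fun i => hf i (Finset.notMem_empty i)
      rw [this]; exact one_mem _
    | @insert s S hsS IH =>
      intro f hf
      have h1 : Pi.mulSingle s (f s) ∈ commutator (∀ i, G i) := by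
        have hfs : f s ∈ commutator (G s) := by rw [h s]; trivial
        have hm := Subgroup.mem_map_of_mem (MonoidHom.mulSingle G s) hfs
        rw [commutator_def, Subgroup.map_commutator] at hm
        exact Subgroup.commutator_mono le_top le_top hm
      have h2 : (Pi.mulSingle s (f s))⁻¹ * f ∈ commutator (∀ i, G i) := by
        refine IH _ (fun i hi => ?_)
        by_cases his : i = s
        · subst his; simp
        · have hins : i ∉ insert s S := by simp [Finset.mem_insert, his, hi]
          simp [Pi.mulSingle_eq_of_ne his, hf i hins]
      have := mul_mem h1 h2
      rwa [mul_inv_cancel_left] at this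
  exact fun f => key Finset.univ f (fun i hi => absurd (Finset.mem_univ i) hi)

end Transfer

section ZModFacts

private lemma zmod_unit_iff (l e : ℕ) (hl : l.Prime) (he : 1 ≤ e) (x : ZMod (l ^ e)) :
    IsUnit x ↔ ¬ l ∣ x.val := by
  haveI : NeZero (l ^ e) := ⟨pow_ne_zero e hl.pos.ne'⟩
  constructor
  · intro hx hdvd
    have hcop : Nat.Coprime (↑hx.unit : ZMod (l ^ e)).val (l ^ e) :=
      ZMod.val_coe_unit_coprime hx.unit
    rw [IsUnit.unit_spec] at hcop
    have hl1 : l ∣ 1 := hcop ▸ Nat.dvd_gcd hdvd (dvd_pow_self l (by omega))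
    exact hl.one_lt.ne' (Nat.dvd_one.mp hl1)
  · intro hndvd
    have hcop : Nat.Coprime x.val (l ^ e) :=
      (((Nat.Prime.coprime_iff_not_dvd hl).mpr hndvd).symm).pow_right e
    have := (ZMod.isUnit_iff_coprime x.val (l ^ e)).mpr hcop
    rwa [ZMod.natCast_val, ZMod.cast_id] at this

private lemma zmod_local (l e : ℕ) (hl : l.Prime) (he : 1 ≤ e) (a : ZMod (l ^ e))
    (ha : ¬IsUnit a) : IsUnit (1 - a) := by
  haveI : NeZero (l ^ e) := ⟨pow_ne_zero e hl.pos.ne'⟩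
  haveI : Fact (1 < l) := ⟨hl.one_lt⟩
  by_contra h1
  have hda : l ∣ a.val := not_not.mp (fun h => ha ((zmod_unit_iff l e hl he a).mpr h))
  have hd1 : l ∣ (1 - a).val := not_not.mp (fun h => h1 ((zmod_unit_iff l e hl he _).mpr h))
  let φ := ZMod.castHom (dvd_pow_self l (by omega : e ≠ 0)) (ZMod l)
  have hφ : ∀ x : ZMod (l ^ e), l ∣ x.val → φ x = 0 := by
    intro x hx
    have : ((x.val : ℕ) : ZMod l) = 0 := (ZMod.natCast_eq_zero_iff _ _).mpr hx
    rw [ZMod.natCast_val] at this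
    simpa [φ, ZMod.castHom_apply] using this
  have : (1 : ZMod l) = 0 := by
    have h1' := hφ _ hd1
    rw [map_sub, _root_.map_one, hφ a hda, sub_zero] at h1'
    exact h1'
  exact one_ne_zero this

private lemma zmod_unit_of_small_prime (l e p : ℕ) (hl : l.Prime) (hp : p.Prime)
    (hne : p ≠ l) : IsUnit ((p : ℕ) : ZMod (l ^ e)) := by
  refine ZMod.isUnit_prime_of_not_dvd hp (fun hdvd => ?_)
  exact hne ((Nat.prime_dvd_prime_iff_eq hp hl).mp (hp.dvd_of_dvd_pow hdvd))

end ZModFacts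

private lemma Gle_perfect (l e : ℕ) (hl : l.Prime) (h5 : 5 ≤ l) (he : 1 ≤ e) :
    commutator (Gle l e) = ⊤ := by
  have h2 : IsUnit (2 : ZMod (l ^ e)) := by
    have := zmod_unit_of_small_prime l e 2 hl Nat.prime_two (by omega)
    simpa using this
  have h3 : IsUnit (3 : ZMod (l ^ e)) := by
    have := zmod_unit_of_small_prime l e 3 hl Nat.prime_three (by omega)
    simpa using this
  have hsl := SL2_commutator_top h2 h3 (fun a => zmod_local l e hl he a)
  exact quotient_perfect (pmOne (l ^ e)) hsl

/-- Let `r ≥ 1`, let `l₁, …, l_r` be pairwise distinct primes with each `l_i ≥ 5`, and let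
`e₁, …, e_r ≥ 1` be integers.  Set `G := G_{l₁,e₁} × ⋯ × G_{l_r,e_r}`.  Let `n ≥ 2` be an
integer and let `H` be a subgroup of `Gⁿ` such that for every pair of distinct indices
`s, t ∈ {1, …, n}` the projection `Gⁿ → G²` onto the `s`-th and `t`-th coordinates maps `H`
surjectively onto `G²`.  Then `H = Gⁿ`. -/
theorem goursat_power_of_product_of_PSL2
    (r : ℕ) (hr : 1 ≤ r) (l e : Fin r → ℕ)
    (hprime : ∀ i, (l i).Prime) (hfive : ∀ i, 5 ≤ l i)
    (hdistinct : ∀ i j, i ≠ j → l i ≠ l j) (he : ∀ i, 1 ≤ e i)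
    (n : ℕ) (hn : 2 ≤ n)
    (H : Subgroup (∀ _ : Fin n, ∀ i : Fin r, Gle (l i) (e i)))
    (hsurj : ∀ s t : Fin n, s ≠ t →
      Subgroup.map
        ((Pi.evalMonoidHom (fun _ : Fin n => ∀ i : Fin r, Gle (l i) (e i)) s).prod
          (Pi.evalMonoidHom (fun _ : Fin n => ∀ i : Fin r, Gle (l i) (e i)) t)) H = ⊤) :
    H = ⊤ := by
  have hperf : commutator (∀ i : Fin r, Gle (l i) (e i)) = ⊤ :=
    pi_perfect (fun i => Gle_perfect (l i) (e i) (hprime i) (hfive i) (he i))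
  refine pair_surj_to_top hperf n hn H ?_
  intro s t hst a b
  have hmem : (a, b) ∈ Subgroup.map
      ((Pi.evalMonoidHom (fun _ : Fin n => ∀ i : Fin r, Gle (l i) (e i)) s).prod
        (Pi.evalMonoidHom (fun _ : Fin n => ∀ i : Fin r, Gle (l i) (e i)) t)) H := by
    rw [hsurj s t hst]; trivial
  obtain ⟨h, hH, hab⟩ := hmem
  exact ⟨h, hH, congrArg Prod.fst hab, congrArg Prod.snd hab⟩
end

section
/- Let l be an odd prime and let e ≥ 2 be an integer. Let V_{l,e} denote the kernel of the reduction homomorphism SL₂(ℤ/l^eℤ) → SL₂(ℤ/l^{e−1}ℤ) induced by the ring homomorphism ℤ/l^eℤ → ℤ/l^{e−1}ℤ. Then V_{l,e} is abelian, and the only subgroups of SL₂(ℤ/l^eℤ) that are contained in V_{l,e} and are normal in SL₂(ℤ/l^eℤ) are the trivial subgroup and V_{l,e} itself. -/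
open Matrix

/-- `V_{l,e}`: the kernel of the reduction homomorphism
`SL₂(ℤ/l^eℤ) → SL₂(ℤ/l^{e-1}ℤ)` induced by the ring homomorphism `ℤ/l^eℤ → ℤ/l^{e-1}ℤ`. -/
def Vle (l e : ℕ) : Subgroup (SpecialLinearGroup (Fin 2) (ZMod (l ^ e))) :=
  MonoidHom.ker
    (SpecialLinearGroup.map
      (ZMod.castHom (pow_dvd_pow l (Nat.sub_le e 1)) (ZMod (l ^ (e - 1)))))

namespace VleAux

variable {l e : ℕ}

/-- The image of `l^(e-1)` in `ZMod (l^e)`. -/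
def Em (l e : ℕ) : ZMod (l ^ e) := ((l ^ (e - 1) : ℕ) : ZMod (l ^ e))

theorem Em_sq (he : 2 ≤ e) : Em l e * Em l e = 0 := by
  rw [Em, ← Nat.cast_mul, ZMod.natCast_eq_zero_iff, ← pow_add]
  exact pow_dvd_pow l (by omega)

/-- Reduction mod `l`. -/
def ρ (l e : ℕ) (he : e ≠ 0) : ZMod (l ^ e) →+* ZMod l :=
  ZMod.castHom (dvd_pow_self l he) (ZMod l)

theorem Em_mul_eq_zero_iff (hl : l.Prime) (he : 2 ≤ e) (x : ZMod (l ^ e)) :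
    Em l e * x = 0 ↔ ρ l e (by omega) x = 0 := by
  haveI : NeZero (l ^ e) := ⟨pow_ne_zero _ hl.pos.ne'⟩
  conv_lhs => rw [Em, ← ZMod.natCast_zmod_val x, ← Nat.cast_mul,
    ZMod.natCast_eq_zero_iff]
  rw [ρ, ZMod.castHom_apply, ← ZMod.natCast_val, ZMod.natCast_eq_zero_iff]
  have hpow : l ^ e = l ^ (e - 1) * l := by rw [← pow_succ]; congr 1; omega
  obtain ⟨n, hn⟩ : ∃ n, x.val = n := ⟨_, rfl⟩
  rw [hn, hpow, Nat.mul_dvd_mul_iff_left (pow_pos hl.pos (e - 1))]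

theorem Em_mul_eq_iff (hl : l.Prime) (he : 2 ≤ e) (x y : ZMod (l ^ e)) :
    Em l e * x = Em l e * y ↔ ρ l e (by omega) x = ρ l e (by omega) y := by
  rw [← sub_eq_zero, ← mul_sub, Em_mul_eq_zero_iff hl he, map_sub, sub_eq_zero]

/-- The element `1 + l^(e-1) • [[a,b],[c,-a]]` of `SL₂(ℤ/l^eℤ)`. -/
def sle (l e : ℕ) (he : 2 ≤ e) (a b c : ZMod (l ^ e)) :
    SpecialLinearGroup (Fin 2) (ZMod (l ^ e)) :=
  ⟨!![1 + Em l e * a, Em l e * b; Em l e * c, 1 - Em l e * a], by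
    rw [Matrix.det_fin_two_of]
    linear_combination (-(a * a) - b * c) * Em_sq (l := l) he⟩

theorem sle_mul (he : 2 ≤ e) (a b c a' b' c' : ZMod (l ^ e)) :
    sle l e he a b c * sle l e he a' b' c' = sle l e he (a + a') (b + b') (c + c') := by
  have h2 := Em_sq (l := l) he
  ext i j
  rw [Matrix.SpecialLinearGroup.coe_mul]
  fin_cases i <;> fin_cases j <;>
    simp [sle, Matrix.mul_fin_two] <;> ring_nf <;>
    simp [show Em l e ^ 2 = 0 by rw [sq]; exact h2]

theorem sle_args (he : 2 ≤ e) {a b c a' b' c' : ZMod (l ^ e)}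
    (ha : a = a') (hb : b = b') (hc : c = c') :
    sle l e he a b c = sle l e he a' b' c' := by rw [ha, hb, hc]

theorem sle_one (he : 2 ≤ e) : sle l e he 0 0 0 = 1 := by
  ext i j
  fin_cases i <;> fin_cases j <;> simp [sle]

theorem sle_inv (he : 2 ≤ e) (a b c : ZMod (l ^ e)) :
    (sle l e he a b c)⁻¹ = sle l e he (-a) (-b) (-c) := by
  rw [eq_comm, eq_inv_iff_mul_eq_one, sle_mul]
  rw [show -a + a = 0 by ring, show -b + b = 0 by ring, show -c + c = 0 by ring, sle_one]

theorem sle_congr (hl : l.Prime) (he : 2 ≤ e) {a b c a' b' c' : ZMod (l ^ e)}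
    (ha : ρ l e (by omega) a = ρ l e (by omega) a')
    (hb : ρ l e (by omega) b = ρ l e (by omega) b')
    (hc : ρ l e (by omega) c = ρ l e (by omega) c') :
    sle l e he a b c = sle l e he a' b' c' := by
  rw [← Em_mul_eq_iff hl he] at ha hb hc
  ext i j
  fin_cases i <;> fin_cases j <;> simp [sle, ha, hb, hc]

theorem sle_mem (hl : l.Prime) (he : 2 ≤ e) (a b c : ZMod (l ^ e)) :
    sle l e he a b c ∈ Vle l e := by
  rw [Vle, MonoidHom.mem_ker]
  ext i j
  have hEm : (ZMod.castHom (pow_dvd_pow l (Nat.sub_le e 1)) (ZMod (l ^ (e - 1))))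
      (Em l e) = 0 := by
    rw [Em, map_natCast, ZMod.natCast_self]
  rw [Matrix.SpecialLinearGroup.map_apply_coe]
  fin_cases i <;> fin_cases j <;>
    simp [sle, hEm, Matrix.SpecialLinearGroup.map_apply_coe, _root_.map_add, _root_.map_sub, _root_.map_mul,
      -ZMod.castHom_apply]

theorem ker_entry (hl : l.Prime) {y : ZMod (l ^ e)}
    (hy : (ZMod.castHom (pow_dvd_pow l (Nat.sub_le e 1)) (ZMod (l ^ (e - 1)))) y = 0) :
    ∃ t, y = Em l e * t := by
  haveI : NeZero (l ^ e) := ⟨pow_ne_zero _ hl.pos.ne'⟩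
  rw [ZMod.castHom_apply, ← ZMod.natCast_val, ZMod.natCast_eq_zero_iff] at hy
  obtain ⟨k, hk⟩ := hy
  refine ⟨(k : ZMod (l ^ e)), ?_⟩
  rw [← ZMod.natCast_zmod_val y, hk, Nat.cast_mul, Em]

theorem mem_sle (hl : l.Prime) (he : 2 ≤ e) {x : SpecialLinearGroup (Fin 2) (ZMod (l ^ e))}
    (hx : x ∈ Vle l e) : ∃ a b c, x = sle l e he a b c := by
  rw [Vle, MonoidHom.mem_ker] at hx
  have h2 := Em_sq (l := l) he
  have hent : ∀ i j, (ZMod.castHom (pow_dvd_pow l (Nat.sub_le e 1)) (ZMod (l ^ (e - 1))))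
      ((x : Matrix (Fin 2) (Fin 2) (ZMod (l ^ e))) i j)
      = (1 : Matrix (Fin 2) (Fin 2) (ZMod (l ^ (e - 1)))) i j := by
    intro i j
    have := congrArg
      (fun z : SpecialLinearGroup (Fin 2) (ZMod (l ^ (e - 1))) =>
        (z : Matrix (Fin 2) (Fin 2) (ZMod (l ^ (e - 1)))) i j) hx
    simpa using this
  obtain ⟨a, ha⟩ : ∃ t, (x : Matrix (Fin 2) (Fin 2) (ZMod (l ^ e))) 0 0 - 1 = Em l e * t := by
    apply ker_entry hl
    have := hent 0 0; rw [Matrix.one_apply_eq] at this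
    rw [map_sub, this, _root_.map_one, sub_self]
  obtain ⟨b, hb⟩ : ∃ t, (x : Matrix (Fin 2) (Fin 2) (ZMod (l ^ e))) 0 1 = Em l e * t := by
    apply ker_entry hl
    have := hent 0 1; simpa using this
  obtain ⟨c, hc⟩ : ∃ t, (x : Matrix (Fin 2) (Fin 2) (ZMod (l ^ e))) 1 0 = Em l e * t := by
    apply ker_entry hl
    have := hent 1 0; simpa using this
  obtain ⟨d, hd⟩ : ∃ t, (x : Matrix (Fin 2) (Fin 2) (ZMod (l ^ e))) 1 1 - 1 = Em l e * t := by
    apply ker_entry hl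
    have := hent 1 1; rw [Matrix.one_apply_eq] at this
    rw [map_sub, this, _root_.map_one, sub_self]
  have hdet : (x : Matrix (Fin 2) (Fin 2) (ZMod (l ^ e))).det = 1 := x.2
  rw [Matrix.det_fin_two] at hdet
  have ha' : (x : Matrix (Fin 2) (Fin 2) (ZMod (l ^ e))) 0 0 = 1 + Em l e * a := by
    linear_combination ha
  have hd' : (x : Matrix (Fin 2) (Fin 2) (ZMod (l ^ e))) 1 1 = 1 + Em l e * d := by
    linear_combination hd
  have hsum : Em l e * a + Em l e * d = 0 := by
    rw [ha', hd', hb, hc] at hdet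
    linear_combination hdet + (b * c - a * d) * h2
  refine ⟨a, b, c, ?_⟩
  ext i j
  fin_cases i <;> fin_cases j <;> simp [sle]
  · rw [ha']
  · rw [hb]
  · rw [hc]
  · rw [hd']; linear_combination hsum

/-- Upper unipotent. -/
def uu (l e : ℕ) (t : ZMod (l ^ e)) : SpecialLinearGroup (Fin 2) (ZMod (l ^ e)) :=
  ⟨!![1, t; 0, 1], by simp [Matrix.det_fin_two_of]⟩

/-- Lower unipotent. -/
def lu (l e : ℕ) (t : ZMod (l ^ e)) : SpecialLinearGroup (Fin 2) (ZMod (l ^ e)) :=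
  ⟨!![1, 0; t, 1], by simp [Matrix.det_fin_two_of]⟩

/-- Weyl element. -/
def ww (l e : ℕ) : SpecialLinearGroup (Fin 2) (ZMod (l ^ e)) :=
  ⟨!![0, 1; -1, 0], by simp [Matrix.det_fin_two_of]⟩

theorem uu_swap (he : 2 ≤ e) (t a b c : ZMod (l ^ e)) :
    uu l e t * sle l e he a b c
      = sle l e he (a + t * c) (b - 2 * t * a - t ^ 2 * c) c * uu l e t := by
  ext i j
  rw [Matrix.SpecialLinearGroup.coe_mul, Matrix.SpecialLinearGroup.coe_mul]
  fin_cases i <;> fin_cases j <;> simp [sle, uu, Matrix.mul_fin_two] <;> ring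

theorem lu_swap (he : 2 ≤ e) (t a b c : ZMod (l ^ e)) :
    lu l e t * sle l e he a b c
      = sle l e he (a - t * b) b (c + 2 * t * a - t ^ 2 * b) * lu l e t := by
  ext i j
  rw [Matrix.SpecialLinearGroup.coe_mul, Matrix.SpecialLinearGroup.coe_mul]
  fin_cases i <;> fin_cases j <;> simp [sle, lu, Matrix.mul_fin_two] <;> ring

theorem ww_swap (he : 2 ≤ e) (a b c : ZMod (l ^ e)) :
    ww l e * sle l e he a b c = sle l e he (-a) (-c) (-b) * ww l e := by
  ext i j
  rw [Matrix.SpecialLinearGroup.coe_mul, Matrix.SpecialLinearGroup.coe_mul]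
  fin_cases i <;> fin_cases j <;> simp [sle, ww, Matrix.mul_fin_two] <;> ring

section W

variable {W : Subgroup (SpecialLinearGroup (Fin 2) (ZMod (l ^ e)))} (hN : W.Normal)

theorem conj_mem_uu (he : 2 ≤ e) (hN : W.Normal) (t a b c : ZMod (l ^ e))
    (h : sle l e he a b c ∈ W) :
    sle l e he (a + t * c) (b - 2 * t * a - t ^ 2 * c) c ∈ W := by
  have hc := hN.conj_mem _ h (uu l e t)
  rwa [mul_inv_eq_iff_eq_mul.mpr (uu_swap he t a b c)] at hc

theorem conj_mem_lu (he : 2 ≤ e) (hN : W.Normal) (t a b c : ZMod (l ^ e))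
    (h : sle l e he a b c ∈ W) :
    sle l e he (a - t * b) b (c + 2 * t * a - t ^ 2 * b) ∈ W := by
  have hc := hN.conj_mem _ h (lu l e t)
  rwa [mul_inv_eq_iff_eq_mul.mpr (lu_swap he t a b c)] at hc

theorem conj_mem_ww (he : 2 ≤ e) (hN : W.Normal) (a b c : ZMod (l ^ e))
    (h : sle l e he a b c ∈ W) :
    sle l e he (-a) (-c) (-b) ∈ W := by
  have hc := hN.conj_mem _ h (ww l e)
  rwa [mul_inv_eq_iff_eq_mul.mpr (ww_swap he a b c)] at hc

/-- One step of the reduction: from `sle a b c` we get `sle c (-(2a)-c) 0`. -/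
theorem stepB (he : 2 ≤ e) (hN : W.Normal) {a b c : ZMod (l ^ e)}
    (h : sle l e he a b c ∈ W) :
    sle l e he c (-(2 * a) - c) 0 ∈ W := by
  have h1 := conj_mem_uu he hN 1 a b c h
  have h2 := W.mul_mem h1 (W.inv_mem h)
  rw [sle_inv, sle_mul] at h2
  rwa [show sle l e he (a + 1 * c + -a) (b - 2 * 1 * a - 1 ^ 2 * c + -b) (c + -c)
      = sle l e he c (-(2 * a) - c) 0 from sle_args he (by ring) (by ring) (by ring)] at h2

theorem mem_congr {G : Type*} [Group G] {W : Subgroup G} {x y : G} (h : x = y)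
    (hx : x ∈ W) : y ∈ W := h ▸ hx

theorem sle_pow_mem (he : 2 ≤ e) (d : ZMod (l ^ e)) (h : sle l e he 0 d 0 ∈ W)
    (k : ℕ) : sle l e he 0 (k * d) 0 ∈ W := by
  induction k with
  | zero =>
    refine mem_congr ?_ (W.one_mem)
    rw [← sle_one (l := l) he]
    exact sle_args he (by ring) (by push_cast; ring) (by ring)
  | succ k ih =>
    have h2 := W.mul_mem ih h
    rw [sle_mul] at h2
    exact mem_congr (sle_args he (by ring) (by push_cast; ring) (by ring)) h2

theorem gen_b (hl : l.Prime) (he : 2 ≤ e) {d : ZMod (l ^ e)}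
    (hd : ρ l e (by omega) d ≠ 0) (h : sle l e he 0 d 0 ∈ W) (s : ZMod (l ^ e)) :
    sle l e he 0 s 0 ∈ W := by
  haveI : Fact l.Prime := ⟨hl⟩
  haveI : NeZero l := ⟨hl.pos.ne'⟩
  set k := ((ρ l e (by omega) s) * (ρ l e (by omega) d)⁻¹).val with hk
  have hkd : ((k : ZMod l)) * ρ l e (by omega) d = ρ l e (by omega) s := by
    rw [hk, ZMod.natCast_zmod_val, mul_assoc, inv_mul_cancel₀ hd, mul_one]
  have := sle_pow_mem he d h k
  refine mem_congr (sle_congr hl he (by simp) ?_ (by simp)) this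
  rw [_root_.map_mul, map_natCast, hkd]

end W

end VleAux


open VleAux in
/-- Let `l` be an odd prime and let `e ≥ 2` be an integer.  Let `V_{l,e}` denote the kernel of
the reduction homomorphism `SL₂(ℤ/l^eℤ) → SL₂(ℤ/l^{e−1}ℤ)` induced by the ring homomorphism
`ℤ/l^eℤ → ℤ/l^{e−1}ℤ`.  Then `V_{l,e}` is abelian, and the only subgroups of `SL₂(ℤ/l^eℤ)`
that are contained in `V_{l,e}` and are normal in `SL₂(ℤ/l^eℤ)` are the trivial subgroup and
`V_{l,e}` itself. -/
theorem Vle_abelian_and_minimal_normal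
    (l : ℕ) (hl : l.Prime) (hodd : Odd l) (e : ℕ) (he : 2 ≤ e) :
    (∀ x ∈ Vle l e, ∀ y ∈ Vle l e, x * y = y * x) ∧
    (∀ W : Subgroup (SpecialLinearGroup (Fin 2) (ZMod (l ^ e))),
      W ≤ Vle l e → W.Normal → W = ⊥ ∨ W = Vle l e) := by

  haveI : Fact l.Prime := ⟨hl⟩
  have hne : e ≠ 0 := by omega
  have hρ2 : (2 : ZMod l) ≠ 0 := by
    intro h
    rw [show ((2 : ZMod l)) = ((2 : ℕ) : ZMod l) by push_cast; ring,
      ZMod.natCast_eq_zero_iff] at h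
    have := (Nat.prime_dvd_prime_iff_eq hl Nat.prime_two).mp h
    rw [Nat.odd_iff] at hodd
    omega
  constructor
  · intro x hx y hy
    obtain ⟨a, b, c, rfl⟩ := mem_sle hl he hx
    obtain ⟨a', b', c', rfl⟩ := mem_sle hl he hy
    rw [sle_mul, sle_mul]
    exact sle_args he (by ring) (by ring) (by ring)
  · intro W hWV hN
    rcases Subgroup.bot_or_exists_ne_one W with hbot | ⟨x, hxW, hx1⟩
    · exact Or.inl hbot
    right
    refine le_antisymm hWV ?_
    obtain ⟨a, b, c, rfl⟩ := mem_sle hl he (hWV hxW)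
    have key : ∃ a' b' c', sle l e he a' b' c' ∈ W ∧ ρ l e hne c' ≠ 0 := by
      by_cases hc : ρ l e hne c ≠ 0
      · exact ⟨a, b, c, hxW, hc⟩
      push_neg at hc
      by_cases hb : ρ l e hne b ≠ 0
      · exact ⟨-a, -c, -b, conj_mem_ww he hN _ _ _ hxW, by
          rw [map_neg, neg_ne_zero]; exact hb⟩
      push_neg at hb
      have ha : ρ l e hne a ≠ 0 := by
        intro h0
        apply hx1
        rw [sle_congr hl he (a' := 0) (b' := 0) (c' := 0) (by simpa using h0)
          (by simpa using hb) (by simpa using hc), sle_one]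
      have hB2 := conj_mem_ww he hN _ _ _ (stepB he hN hxW)
      refine ⟨-c, -0, -(-(2 * a) - c), hB2, ?_⟩
      have : ρ l e hne (-(-(2 * a) - c)) = 2 * ρ l e hne a := by
        rw [map_neg, map_sub, map_neg, _root_.map_mul, map_ofNat, hc]
        ring
      rw [this]
      exact mul_ne_zero hρ2 ha
    obtain ⟨a', b', c', hW', hc'⟩ := key
    have hD := stepB he hN (stepB he hN hW')
    have hd : ρ l e hne (-(2 * c') - 0) ≠ 0 := by
      have : ρ l e hne (-(2 * c') - 0) = -(2 * ρ l e hne c') := by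
        rw [map_sub, map_neg, _root_.map_mul, map_ofNat, map_zero]
        ring
      rw [this, neg_ne_zero]
      exact mul_ne_zero hρ2 hc'
    have hball : ∀ s, sle l e he 0 s 0 ∈ W := fun s => gen_b hl he hd hD s
    have hcall : ∀ s, sle l e he 0 0 s ∈ W := fun s => by
      have h1 := conj_mem_ww he hN _ _ _ (hball (-s))
      exact mem_congr (sle_args he (by ring) (by ring) (by ring)) h1
    have haall : ∀ s, sle l e he s 0 0 ∈ W := fun s => by
      have h1 := conj_mem_lu he hN (-1) 0 s 0 (hball s)
      have h2 := W.mul_mem (W.mul_mem h1 (hball (-s))) (hcall s)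
      rw [sle_mul, sle_mul] at h2
      exact mem_congr (sle_args he (by ring) (by ring) (by ring)) h2
    intro v hv
    obtain ⟨av, bv, cv, rfl⟩ := mem_sle hl he hv
    have h2 := W.mul_mem (W.mul_mem (haall av) (hball bv)) (hcall cv)
    rw [sle_mul, sle_mul] at h2
    exact mem_congr (sle_args he (by ring) (by ring) (by ring)) h2
end

section
/- Let l ≥ 5 be a prime and let e ≥ 2 be an integer. Then every element g of SL₂(ℤ/l^eℤ) satisfying g^l = 1 lies in the kernel of the reduction homomorphism SL₂(ℤ/l^eℤ) → SL₂(ℤ/l^{e−1}ℤ) induced by the ring homomorphism ℤ/l^eℤ → ℤ/l^{e−1}ℤ; that is, the l-torsion of SL₂(ℤ/l^eℤ) is contained in the subgroup of matrices congruent to the identity modulo l^{e−1}. -/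
open Matrix

section AuxLTorsion

lemma entry_dvd_mul_right' {a : ℤ} {M P : Matrix (Fin 2) (Fin 2) ℤ}
    (h : ∀ i j, a ∣ M i j) (i j : Fin 2) : a ∣ (P * M) i j := by
  rw [Matrix.mul_apply]
  exact Finset.dvd_sum fun k _ => Dvd.dvd.mul_left (h k j) _

lemma entry_dvd_mul_mul' {a b : ℤ} {M P : Matrix (Fin 2) (Fin 2) ℤ}
    (hM : ∀ i j, a ∣ M i j) (hP : ∀ i j, b ∣ P i j) (i j : Fin 2) :
    a * b ∣ (M * P) i j := by
  rw [Matrix.mul_apply]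
  exact Finset.dvd_sum fun k _ => mul_dvd_mul (hM i k) (hP k j)

/-- Cayley–Hamilton for 2×2 matrices. -/
lemma ch_fin_two' {R : Type*} [CommRing R] (A : Matrix (Fin 2) (Fin 2) R) :
    A * A = A.trace • A - A.det • 1 := by
  ext i j
  fin_cases i <;> fin_cases j <;>
    simp [Matrix.mul_apply, Fin.sum_univ_two, Matrix.trace_fin_two, Matrix.det_fin_two,
      Matrix.one_apply] <;> ring

lemma pow_of_sq_smul' {R : Type*} [CommRing R] {A : Matrix (Fin 2) (Fin 2) R} {t : R}
    (h : A * A = t • A) : ∀ n : ℕ, A ^ (n + 1) = t ^ n • A := by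
  intro n
  induction n with
  | zero => simp
  | succ n ih =>
      rw [pow_succ, ih, smul_mul_assoc, h, smul_smul, ← pow_succ]

/-- A nilpotent 2×2 matrix over a field has square zero. -/
lemma sq_eq_zero_of_pow_eq_zero' {K : Type*} [Field K] {A : Matrix (Fin 2) (Fin 2) K}
    {n : ℕ} (hn : n ≠ 0) (h : A ^ n = 0) : A * A = 0 := by
  have hdet : A.det = 0 := by
    have h1 : (A.det) ^ n = 0 := by rw [← Matrix.det_pow, h]; exact Matrix.det_zero
    exact pow_eq_zero_iff hn |>.mp h1
  have hsq : A * A = A.trace • A := by rw [ch_fin_two', hdet]; simp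
  by_cases hA : A = 0
  · rw [hA]; simp
  · obtain ⟨m, rfl⟩ := Nat.exists_eq_succ_of_ne_zero hn
    rw [pow_of_sq_smul' hsq m] at h
    rcases m with _ | m
    · exact absurd (by simpa using h) hA
    · have ht : A.trace ^ (m + 1) = 0 := by
        by_contra h0
        exact hA (by simpa [h0, smul_eq_zero] using h)
      have htr : A.trace = 0 := pow_eq_zero_iff (Nat.succ_ne_zero m) |>.mp ht
      rw [hsq, htr, zero_smul]

/-- mod-`l` nilpotency: if `(1+M)^l ≡ 1 (mod l)` entrywise then `l` divides the
entries of `M * M`. -/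
lemma sq_entries_dvd' (l : ℕ) (hl : l.Prime) (M : Matrix (Fin 2) (Fin 2) ℤ)
    (H : ∀ i j, (l : ℤ) ∣ ((1 + M) ^ l - 1) i j) :
    ∀ i j, (l : ℤ) ∣ (M * M) i j := by
  haveI : Fact l.Prime := ⟨hl⟩
  set φ : Matrix (Fin 2) (Fin 2) ℤ →+* Matrix (Fin 2) (Fin 2) (ZMod l) :=
    (Int.castRingHom (ZMod l)).mapMatrix with hφ
  set A : Matrix (Fin 2) (Fin 2) (ZMod l) := φ M with hA
  have h0 : φ ((1 + M) ^ l - 1) = 0 := by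
    ext i j
    simpa [hφ] using (ZMod.intCast_zmod_eq_zero_iff_dvd _ l).mpr (H i j)
  rw [map_sub, map_pow, map_add, _root_.map_one] at h0
  have h1 : (1 + A) ^ l = 1 := by rwa [sub_eq_zero] at h0
  have h2 : (1 + A) ^ l = 1 + A ^ l := by
    simpa using add_pow_char_of_commute l (Commute.one_left A)
  have h3 : A ^ l = 0 := by
    have := h1.symm.trans h2
    simpa using this.symm
  have h4 : A * A = 0 := sq_eq_zero_of_pow_eq_zero' hl.ne_zero h3
  intro i j
  rw [← ZMod.intCast_zmod_eq_zero_iff_dvd]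
  have h6 : φ (M * M) i j = 0 := by rw [_root_.map_mul]; rw [← hA, h4]; rfl
  simpa [hφ] using h6

lemma natCast_matrix_smul' (c : ℕ) (X : Matrix (Fin 2) (Fin 2) ℤ) :
    X * ((c : ℕ) : Matrix (Fin 2) (Fin 2) ℤ) = (c : ℤ) • X := by
  have h1 : ((c : ℕ) : Matrix (Fin 2) (Fin 2) ℤ) = c • (1 : Matrix (Fin 2) (Fin 2) ℤ) := by
    rw [nsmul_eq_mul, mul_one]
  rw [h1, mul_smul_comm, mul_one, Nat.cast_smul_eq_nsmul]

/-- Key induction: if `(1+M)^l ≡ 1 (mod l^e)` entrywise, then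
`M ≡ 0 (mod l^(e-1))` entrywise. -/
lemma key_induction' (l : ℕ) (hl : l.Prime) (hl5 : 5 ≤ l) :
    ∀ e : ℕ, 1 ≤ e → ∀ M : Matrix (Fin 2) (Fin 2) ℤ,
      (∀ i j, (l : ℤ) ^ e ∣ ((1 + M) ^ l - 1) i j) →
      ∀ i j, (l : ℤ) ^ (e - 1) ∣ M i j := by
  intro e he
  induction e, he using Nat.le_induction with
  | base => intro M _ i j; simp
  | succ n hn IH =>
    intro M H i j
    have hl0 : (l : ℤ) ≠ 0 := by exact_mod_cast hl.ne_zero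
    have hM2 : ∀ i j, (l : ℤ) ^ n ∣ (M * M) i j := by
      rcases Nat.lt_or_ge n 2 with h2 | h2
      · have hn1 : n = 1 := by omega
        subst hn1
        intro i j
        rw [pow_one]
        refine sq_entries_dvd' l hl M (fun i j => ?_) i j
        have h3 : (l : ℤ) ^ 1 ∣ (l : ℤ) ^ 2 := pow_dvd_pow _ (by omega)
        rw [pow_one] at h3
        exact dvd_trans h3 (H i j)
      · have hIH : ∀ i j, (l : ℤ) ^ (n - 1) ∣ M i j :=
          IH M (fun i j => dvd_trans (pow_dvd_pow _ (by omega)) (H i j))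
        intro i j
        have h3 := entry_dvd_mul_mul' hIH hIH i j
        rw [← pow_add] at h3
        exact dvd_trans (pow_dvd_pow _ (by omega)) h3
    have expand : (1 + M) ^ l =
        ∑ k ∈ Finset.range (l + 1), (l.choose k : ℤ) • M ^ k := by
      rw [add_comm, (Commute.one_right M).add_pow l]
      refine Finset.sum_congr rfl fun k _ => ?_
      rw [one_pow, mul_one, natCast_matrix_smul']
    obtain ⟨m, rfl⟩ : ∃ m, l = m + 5 := ⟨l - 5, by omega⟩
    have hsplit : (1 + M) ^ (m + 5) - 1 = ((m + 5 : ℕ) : ℤ) • M +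
        ∑ k ∈ Finset.range (m + 4),
          ((m + 5).choose (k + 1 + 1) : ℤ) • M ^ (k + 1 + 1) := by
      rw [expand, Finset.sum_range_succ' _ (m + 5), Finset.sum_range_succ' _ (m + 4)]
      simp only [zero_add, Nat.choose_zero_right, Nat.choose_one_right, pow_zero,
        pow_one, Nat.cast_one, one_smul]
      abel
    have hRdvd : ∀ i j, ((m + 5 : ℕ) : ℤ) ^ (n + 1) ∣
        (∑ k ∈ Finset.range (m + 4),
          ((m + 5).choose (k + 1 + 1) : ℤ) • M ^ (k + 1 + 1)) i j := by
      intro i j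
      rw [Matrix.sum_apply]
      refine Finset.dvd_sum fun k hk => ?_
      rw [Finset.mem_range] at hk
      rw [Matrix.smul_apply, smul_eq_mul]
      by_cases hkl : k = m + 3
      · subst hkl
        rw [show m + 3 + 1 + 1 = m + 5 from by omega, Nat.choose_self, Nat.cast_one,
          one_mul]
        have hpow : M ^ (m + 5) = (M ^ (m + 1) * (M * M)) * (M * M) := by
          rw [show m + 5 = m + 1 + 2 + 2 from by omega, pow_add, pow_add, pow_two]
        rw [hpow]
        have hA : ∀ i j, ((m + 5 : ℕ) : ℤ) ^ n ∣ (M ^ (m + 1) * (M * M)) i j :=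
          fun i j => entry_dvd_mul_right' hM2 i j
        have h4 := entry_dvd_mul_mul' hA hM2 i j
        rw [← pow_add] at h4
        exact dvd_trans (pow_dvd_pow _ (by omega : n + 1 ≤ n + n)) h4
      · have hcd : ((m + 5 : ℕ) : ℤ) ∣ ((m + 5).choose (k + 1 + 1) : ℤ) :=
          Int.natCast_dvd_natCast.mpr (hl.dvd_choose_self (by omega) (by omega))
        have hMk : ((m + 5 : ℕ) : ℤ) ^ n ∣ (M ^ (k + 1 + 1)) i j := by
          have hpow : M ^ (k + 1 + 1) = M ^ k * (M * M) := by
            rw [show k + 1 + 1 = k + 2 from rfl, pow_add, pow_two]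
          rw [hpow]
          exact entry_dvd_mul_right' hM2 i j
        calc ((m + 5 : ℕ) : ℤ) ^ (n + 1)
            = ((m + 5 : ℕ) : ℤ) * ((m + 5 : ℕ) : ℤ) ^ n := by rw [pow_succ']
          _ ∣ ((m + 5).choose (k + 1 + 1) : ℤ) * (M ^ (k + 1 + 1)) i j :=
              mul_dvd_mul hcd hMk
    have hlM : ((m + 5 : ℕ) : ℤ) ^ (n + 1) ∣ (((m + 5 : ℕ) : ℤ) • M) i j := by
      have h1 := H i j
      rw [hsplit, Matrix.add_apply] at h1
      simpa using dvd_sub h1 (hRdvd i j)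
    rw [Matrix.smul_apply, smul_eq_mul, pow_succ'] at hlM
    have h5 := (mul_dvd_mul_iff_left hl0).mp hlM
    simpa using h5

end AuxLTorsion

/-- Let `l ≥ 5` be a prime and let `e ≥ 2` be an integer.  Then every element `g` of
`SL₂(ℤ/l^eℤ)` satisfying `g^l = 1` lies in the kernel of the reduction homomorphism
`SL₂(ℤ/l^eℤ) → SL₂(ℤ/l^{e−1}ℤ)` induced by the ring homomorphism `ℤ/l^eℤ → ℤ/l^{e−1}ℤ`;
that is, the `l`-torsion of `SL₂(ℤ/l^eℤ)` is contained in the subgroup of matrices congruent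
to the identity modulo `l^{e−1}`. -/
theorem l_torsion_in_kernel_of_reduction
    (l : ℕ) (hl : l.Prime) (hl5 : 5 ≤ l) (e : ℕ) (he : 2 ≤ e)
    (g : SpecialLinearGroup (Fin 2) (ZMod (l ^ e))) (hg : g ^ l = 1) :
    g ∈ MonoidHom.ker
      (SpecialLinearGroup.map
        (ZMod.castHom (pow_dvd_pow l (Nat.sub_le e 1)) (ZMod (l ^ (e - 1))))) := by
  haveI : NeZero (l ^ e) := ⟨pow_ne_zero e hl.ne_zero⟩
  set G : Matrix (Fin 2) (Fin 2) ℤ :=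
    fun i j => (((g : Matrix (Fin 2) (Fin 2) (ZMod (l ^ e))) i j).val : ℤ) with hG
  have hGg : ∀ i j, ((G i j : ℤ) : ZMod (l ^ e)) = (g : Matrix (Fin 2) (Fin 2) (ZMod (l ^ e))) i j := by
    intro i j
    rw [hG]
    push_cast
    simp [ZMod.natCast_val, ZMod.cast_id]
  set M : Matrix (Fin 2) (Fin 2) ℤ := G - 1 with hM
  have h1M : 1 + M = G := by rw [hM]; abel
  set φ : Matrix (Fin 2) (Fin 2) ℤ →+* Matrix (Fin 2) (Fin 2) (ZMod (l ^ e)) :=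
    (Int.castRingHom (ZMod (l ^ e))).mapMatrix with hφ
  have hφG : φ G = (g : Matrix (Fin 2) (Fin 2) (ZMod (l ^ e))) := by
    ext i j
    simpa [hφ] using hGg i j
  have H : ∀ i j, (l : ℤ) ^ e ∣ ((1 + M) ^ l - 1) i j := by
    intro i j
    rw [h1M]
    have h0 : φ (G ^ l - 1) = 0 := by
      rw [map_sub, map_pow, _root_.map_one, hφG,
        ← Matrix.SpecialLinearGroup.coe_pow, hg]
      simp
    have h2 : (((G ^ l - 1) i j : ℤ) : ZMod (l ^ e)) = 0 := by
      have h3 : φ (G ^ l - 1) i j = 0 := by rw [h0]; rfl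
      simpa [hφ] using h3
    have h4 := (ZMod.intCast_zmod_eq_zero_iff_dvd _ (l ^ e)).mp h2
    exact_mod_cast h4
  have hkey := key_induction' l hl hl5 e (by omega) M H
  rw [MonoidHom.mem_ker]
  apply Subtype.ext
  ext i j
  have lhs_eq : ((SpecialLinearGroup.map
      (ZMod.castHom (pow_dvd_pow l (Nat.sub_le e 1)) (ZMod (l ^ (e - 1)))) g :
        Matrix (Fin 2) (Fin 2) (ZMod (l ^ (e - 1)))) i j)
      = ((G i j : ℤ) : ZMod (l ^ (e - 1))) := by
    simp only [SpecialLinearGroup.map]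
    show (ZMod.castHom (pow_dvd_pow l (Nat.sub_le e 1)) (ZMod (l ^ (e - 1))))
      ((g : Matrix (Fin 2) (Fin 2) (ZMod (l ^ e))) i j) = _
    rw [← hGg i j, map_intCast]
  have hdvd : ((l ^ (e - 1) : ℕ) : ℤ) ∣ M i j := by
    have := hkey i j
    push_cast
    exact this
  have h5 : ((M i j : ℤ) : ZMod (l ^ (e - 1))) = 0 :=
    (ZMod.intCast_zmod_eq_zero_iff_dvd _ _).mpr hdvd
  rw [hM, Matrix.sub_apply] at h5
  push_cast at h5
  rw [lhs_eq, sub_eq_zero.mp h5]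
  by_cases hij : i = j <;> simp [Matrix.one_apply, hij]
end

section
/- Let m ≥ 2 be an integer and let H_m be the subgroup of GL₂(ℝ) generated by the image of SL₂(ℤ) and the diagonal matrix diag(m, 1). Then the intersection H_m ∩ SL₂(ℝ) is dense in SL₂(ℝ); that is, the set of elements of SL₂(ℝ) that belong to H_m is dense in SL₂(ℝ) for its topology as a subset of the 2×2 real matrices. -/
open Matrix

/-- The diagonal matrix `diag(m, 1)` as an element of `GL₂(ℝ)`. -/
noncomputable def diagm (m : ℕ) (hm : 2 ≤ m) : GL (Fin 2) ℝ :=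
  Matrix.GeneralLinearGroup.mkOfDetNeZero (Matrix.diagonal ![(m : ℝ), 1])
    (by
      have hm0 : (m : ℝ) ≠ 0 := by positivity
      simp [Matrix.det_diagonal, Fin.prod_univ_two, hm0])

/-- `H_m`: the subgroup of `GL₂(ℝ)` generated by the image of `SL₂(ℤ)` and the diagonal
matrix `diag(m, 1)`. -/
noncomputable def Hm (m : ℕ) (hm : 2 ≤ m) : Subgroup (GL (Fin 2) ℝ) :=
  Subgroup.closure
    (Set.range
        (fun A : SpecialLinearGroup (Fin 2) ℤ =>
          SpecialLinearGroup.toGL (SpecialLinearGroup.map (Int.castRingHom ℝ) A)) ∪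
      {diagm m hm})

/-! ### Auxiliary development -/

abbrev SL2 := Matrix.SpecialLinearGroup (Fin 2) ℝ

instance : TopologicalSpace SL2 :=
  (inferInstance : TopologicalSpace {A : Matrix (Fin 2) (Fin 2) ℝ // A.det = 1})

instance : IsTopologicalGroup SL2 where
  continuous_mul := by
    have h : Continuous fun p : SL2 × SL2 => ((p.1 * p.2 : SL2) : Matrix (Fin 2) (Fin 2) ℝ) := by
      simp only [Matrix.SpecialLinearGroup.coe_mul]
      exact (continuous_subtype_val.comp continuous_fst).matrix_mul
        (continuous_subtype_val.comp continuous_snd)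
    exact continuous_induced_rng.2 h
  continuous_inv := by
    have h : Continuous fun A : SL2 => ((A⁻¹ : SL2) : Matrix (Fin 2) (Fin 2) ℝ) := by
      simp only [Matrix.SpecialLinearGroup.coe_inv]
      exact continuous_subtype_val.matrix_adjugate
    exact continuous_induced_rng.2 h

/-- upper unipotent -/
def uu (t : ℝ) : SL2 := ⟨!![1, t; 0, 1], by simp [Matrix.det_fin_two_of]⟩
/-- lower unipotent -/
def ll (t : ℝ) : SL2 := ⟨!![1, 0; t, 1], by simp [Matrix.det_fin_two_of]⟩

/-- The intersection of `Hm` with `SL₂(ℝ)`, as a subgroup of `SL₂(ℝ)`. -/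
noncomputable def Gam (m : ℕ) (hm : 2 ≤ m) : Subgroup SL2 :=
  (Hm m hm).comap Matrix.SpecialLinearGroup.toGL

lemma diagm_coe (m : ℕ) (hm : 2 ≤ m) :
    ((diagm m hm : GL (Fin 2) ℝ) : Matrix (Fin 2) (Fin 2) ℝ) = !![(m:ℝ), 0; 0, 1] := by
  show Matrix.diagonal ![(m:ℝ), 1] = _
  ext i j
  fin_cases i <;> fin_cases j <;> simp [Matrix.diagonal]

lemma diagm_mem (m : ℕ) (hm : 2 ≤ m) : diagm m hm ∈ Hm m hm :=
  Subgroup.subset_closure (Or.inr rfl)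

lemma uu_int_mem (m : ℕ) (hm : 2 ≤ m) (a : ℤ) : uu a ∈ Gam m hm := by
  have h : Matrix.SpecialLinearGroup.toGL (uu (a : ℝ)) =
      Matrix.SpecialLinearGroup.toGL
        (Matrix.SpecialLinearGroup.map (Int.castRingHom ℝ)
          ⟨!![1, a; 0, 1], by simp [Matrix.det_fin_two_of]⟩) := by
    refine Units.ext ?_
    show (uu (a:ℝ)).val = ((!![1, a; 0, 1] : Matrix (Fin 2) (Fin 2) ℤ)).map (Int.cast)
    ext i j
    fin_cases i <;> fin_cases j <;> simp [uu]
  show Matrix.SpecialLinearGroup.toGL (uu (a:ℝ)) ∈ Hm m hm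
  rw [h]
  exact Subgroup.subset_closure (Or.inl ⟨_, rfl⟩)

lemma ll_int_mem (m : ℕ) (hm : 2 ≤ m) (a : ℤ) : ll a ∈ Gam m hm := by
  have h : Matrix.SpecialLinearGroup.toGL (ll (a : ℝ)) =
      Matrix.SpecialLinearGroup.toGL
        (Matrix.SpecialLinearGroup.map (Int.castRingHom ℝ)
          ⟨!![1, 0; a, 1], by simp [Matrix.det_fin_two_of]⟩) := by
    refine Units.ext ?_
    show (ll (a:ℝ)).val = ((!![1, 0; a, 1] : Matrix (Fin 2) (Fin 2) ℤ)).map (Int.cast)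
    ext i j
    fin_cases i <;> fin_cases j <;> simp [ll]
  show Matrix.SpecialLinearGroup.toGL (ll (a:ℝ)) ∈ Hm m hm
  rw [h]
  exact Subgroup.subset_closure (Or.inl ⟨_, rfl⟩)

lemma uu_step (m : ℕ) (hm : 2 ≤ m) (x : ℝ) (hx : uu x ∈ Gam m hm) :
    uu (x / m) ∈ Gam m hm := by
  have hm0 : (m : ℝ) ≠ 0 := by positivity
  have key : diagm m hm * Matrix.SpecialLinearGroup.toGL (uu (x / m)) =
      Matrix.SpecialLinearGroup.toGL (uu x) * diagm m hm := by
    refine Units.ext ?_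
    show ((diagm m hm : GL (Fin 2) ℝ) : Matrix (Fin 2) (Fin 2) ℝ) * (uu (x/m)).val =
      (uu x).val * ((diagm m hm : GL (Fin 2) ℝ) : Matrix (Fin 2) (Fin 2) ℝ)
    rw [diagm_coe]
    show (!![(m:ℝ),0;0,1] : Matrix (Fin 2) (Fin 2) ℝ) * !![1, x/m; 0, 1] =
      !![1,x;0,1] * !![(m:ℝ),0;0,1]
    ext i j
    fin_cases i <;> fin_cases j <;> simp [Matrix.mul_apply, Fin.sum_univ_two] <;> field_simp
  have h2 : Matrix.SpecialLinearGroup.toGL (uu (x / m)) =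
      (diagm m hm)⁻¹ * (Matrix.SpecialLinearGroup.toGL (uu x) * diagm m hm) := by
    rw [← key]; group
  show Matrix.SpecialLinearGroup.toGL (uu (x/m)) ∈ Hm m hm
  rw [h2]
  exact mul_mem (inv_mem (diagm_mem m hm)) (mul_mem hx (diagm_mem m hm))

lemma ll_step (m : ℕ) (hm : 2 ≤ m) (x : ℝ) (hx : ll x ∈ Gam m hm) :
    ll (x / m) ∈ Gam m hm := by
  have hm0 : (m : ℝ) ≠ 0 := by positivity
  have key : Matrix.SpecialLinearGroup.toGL (ll (x / m)) * diagm m hm =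
      diagm m hm * Matrix.SpecialLinearGroup.toGL (ll x) := by
    refine Units.ext ?_
    show (ll (x/m)).val * ((diagm m hm : GL (Fin 2) ℝ) : Matrix (Fin 2) (Fin 2) ℝ) =
      ((diagm m hm : GL (Fin 2) ℝ) : Matrix (Fin 2) (Fin 2) ℝ) * (ll x).val
    rw [diagm_coe]
    show (!![1, 0; x/m, 1] : Matrix (Fin 2) (Fin 2) ℝ) * !![(m:ℝ),0;0,1] =
      !![(m:ℝ),0;0,1] * !![1,0;x,1]
    ext i j
    fin_cases i <;> fin_cases j <;> simp [Matrix.mul_apply, Fin.sum_univ_two] <;> field_simp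
  have h2 : Matrix.SpecialLinearGroup.toGL (ll (x / m)) =
      (diagm m hm * Matrix.SpecialLinearGroup.toGL (ll x)) * (diagm m hm)⁻¹ := by
    rw [← key]; group
  show Matrix.SpecialLinearGroup.toGL (ll (x/m)) ∈ Hm m hm
  rw [h2]
  exact mul_mem (mul_mem (diagm_mem m hm) hx) (inv_mem (diagm_mem m hm))

lemma uu_dyadic_mem (m : ℕ) (hm : 2 ≤ m) (a : ℤ) (k : ℕ) :
    uu (a / (m:ℝ)^k) ∈ Gam m hm := by
  induction k with
  | zero => simpa using uu_int_mem m hm a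
  | succ k ih =>
      have h : (a : ℝ) / (m:ℝ)^(k+1) = (a / (m:ℝ)^k) / m := by rw [pow_succ]; ring
      rw [h]
      exact uu_step m hm _ ih

lemma ll_dyadic_mem (m : ℕ) (hm : 2 ≤ m) (a : ℤ) (k : ℕ) :
    ll (a / (m:ℝ)^k) ∈ Gam m hm := by
  induction k with
  | zero => simpa using ll_int_mem m hm a
  | succ k ih =>
      have h : (a : ℝ) / (m:ℝ)^(k+1) = (a / (m:ℝ)^k) / m := by rw [pow_succ]; ring
      rw [h]
      exact ll_step m hm _ ih

lemma dense_ratios (m : ℕ) (hm : 2 ≤ m) :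
    Dense {x : ℝ | ∃ a : ℤ, ∃ k : ℕ, x = a / (m:ℝ)^k} := by
  have hm1 : (1:ℝ) < m := by exact_mod_cast lt_of_lt_of_le one_lt_two hm
  have hm0 : (0:ℝ) < m := lt_trans one_pos hm1
  rw [Metric.dense_iff]
  intro x r hr
  obtain ⟨k, hk⟩ : ∃ k : ℕ, (1/(m:ℝ))^k < r := by
    refine exists_pow_lt_of_lt_one hr ?_
    rw [div_lt_one hm0]; exact hm1
  have hmk : (0:ℝ) < (m:ℝ)^k := pow_pos hm0 k
  refine ⟨(⌊x * (m:ℝ)^k⌋ : ℝ) / (m:ℝ)^k, ?_, ⟨_, k, rfl⟩⟩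
  rw [Metric.mem_ball, Real.dist_eq, abs_sub_comm]
  have h1 : (⌊x * (m:ℝ)^k⌋ : ℝ) ≤ x * (m:ℝ)^k := Int.floor_le _
  have h2 : x * (m:ℝ)^k < ⌊x * (m:ℝ)^k⌋ + 1 := Int.lt_floor_add_one _
  rw [abs_of_nonneg (by rw [sub_nonneg, div_le_iff₀ hmk]; linarith)]
  calc x - (⌊x * (m:ℝ)^k⌋ : ℝ) / (m:ℝ)^k < 1 / (m:ℝ)^k := by
        rw [sub_lt_iff_lt_add, ← add_div, lt_div_iff₀ hmk]; linarith
    _ = (1/(m:ℝ))^k := by rw [div_pow, one_pow]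
    _ < r := hk

lemma continuous_uu : Continuous uu := by
  refine continuous_induced_rng.2 ?_
  have h : (Subtype.val ∘ uu) = fun t : ℝ => !![1, t; 0, 1] := rfl
  show Continuous (fun t : ℝ => !![1, t; 0, 1])
  refine continuous_matrix fun i j => ?_
  fin_cases i <;> fin_cases j <;> simp <;> continuity

lemma continuous_ll : Continuous ll := by
  refine continuous_induced_rng.2 ?_
  have h : (Subtype.val ∘ ll) = fun t : ℝ => !![1, 0; t, 1] := rfl
  show Continuous (fun t : ℝ => !![1, 0; t, 1])
  refine continuous_matrix fun i j => ?_
  fin_cases i <;> fin_cases j <;> simp <;> continuity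

lemma uu_mem_closure (m : ℕ) (hm : 2 ≤ m) (t : ℝ) :
    uu t ∈ (Gam m hm).topologicalClosure := by
  have h1 : t ∈ closure {x : ℝ | ∃ a : ℤ, ∃ k : ℕ, x = a / (m:ℝ)^k} :=
    (dense_ratios m hm) t
  have h2 : Set.MapsTo uu {x : ℝ | ∃ a : ℤ, ∃ k : ℕ, x = a / (m:ℝ)^k}
      ((Gam m hm : Set SL2)) := by
    rintro x ⟨a, k, rfl⟩
    exact uu_dyadic_mem m hm a k
  exact map_mem_closure continuous_uu h1 h2

lemma ll_mem_closure (m : ℕ) (hm : 2 ≤ m) (t : ℝ) :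
    ll t ∈ (Gam m hm).topologicalClosure := by
  have h1 : t ∈ closure {x : ℝ | ∃ a : ℤ, ∃ k : ℕ, x = a / (m:ℝ)^k} :=
    (dense_ratios m hm) t
  have h2 : Set.MapsTo ll {x : ℝ | ∃ a : ℤ, ∃ k : ℕ, x = a / (m:ℝ)^k}
      ((Gam m hm : Set SL2)) := by
    rintro x ⟨a, k, rfl⟩
    exact ll_dyadic_mem m hm a k
  exact map_mem_closure continuous_ll h1 h2

lemma eq_uu_ll_uu (x c y : ℝ) (hc : c ≠ 0) (A : SL2)
    (ha : (A : Matrix (Fin 2) (Fin 2) ℝ) 1 0 = c)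
    (hx : x = ((A : Matrix (Fin 2) (Fin 2) ℝ) 0 0 - 1)/c)
    (hy : y = ((A : Matrix (Fin 2) (Fin 2) ℝ) 1 1 - 1)/c) :
    A = uu x * ll c * uu y := by
  have hdet : (A : Matrix (Fin 2) (Fin 2) ℝ).det = 1 := A.2
  rw [Matrix.det_fin_two] at hdet
  apply Subtype.ext
  show (A : Matrix (Fin 2) (Fin 2) ℝ) = (!![1,x;0,1] * !![1,0;c,1]) * !![1,y;0,1]
  rw [Matrix.eta_fin_two (A : Matrix (Fin 2) (Fin 2) ℝ)]
  ext i j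
  fin_cases i <;> fin_cases j <;>
    simp [Matrix.mul_apply, Fin.sum_univ_two, hx, hy, ha] <;>
    field_simp <;>
    first
    | linear_combination (-1:ℝ) * hdet - (A : Matrix (Fin 2) (Fin 2) ℝ) 0 1 * ha
    | linear_combination

lemma mem_of_unipotents {K : Subgroup SL2} (hu : ∀ t, uu t ∈ K) (hl : ∀ t, ll t ∈ K)
    (A : SL2) : A ∈ K := by
  have key : ∀ B : SL2, (B : Matrix (Fin 2) (Fin 2) ℝ) 1 0 ≠ 0 → B ∈ K := by
    intro B hc
    rw [eq_uu_ll_uu _ _ _ hc B rfl rfl rfl]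
    exact mul_mem (mul_mem (hu _) (hl _)) (hu _)
  by_cases hc : (A : Matrix (Fin 2) (Fin 2) ℝ) 1 0 ≠ 0
  · exact key A hc
  · push_neg at hc
    have hdet : (A : Matrix (Fin 2) (Fin 2) ℝ).det = 1 := A.2
    rw [Matrix.det_fin_two] at hdet
    have ha : (A : Matrix (Fin 2) (Fin 2) ℝ) 0 0 ≠ 0 := by
      intro h0
      rw [h0, hc] at hdet
      simp at hdet
    have hB : ((ll 1 * A : SL2) : Matrix (Fin 2) (Fin 2) ℝ) 1 0 ≠ 0 := by
      have : ((ll 1 * A : SL2) : Matrix (Fin 2) (Fin 2) ℝ) 1 0 =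
          (A : Matrix (Fin 2) (Fin 2) ℝ) 0 0 + (A : Matrix (Fin 2) (Fin 2) ℝ) 1 0 := by
        show ((ll 1).val * A.val) 1 0 = _
        simp [ll, Matrix.mul_apply, Fin.sum_univ_two]
      rw [this, hc, add_zero]
      exact ha
    have hmem : (ll 1 * A : SL2) ∈ K := key _ hB
    have : A = (ll 1)⁻¹ * (ll 1 * A) := by group
    rw [this]
    exact mul_mem (inv_mem (hl 1)) hmem

lemma gam_dense (m : ℕ) (hm : 2 ≤ m) : Dense ((Gam m hm : Set SL2)) := by
  have htop : (Gam m hm).topologicalClosure = ⊤ := by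
    rw [eq_top_iff]
    intro A _
    exact mem_of_unipotents (uu_mem_closure m hm) (ll_mem_closure m hm) A
  rw [dense_iff_closure_eq, ← Subgroup.topologicalClosure_coe, htop]
  rfl

/-- Let `m ≥ 2` be an integer and let `H_m` be the subgroup of `GL₂(ℝ)` generated by the image
of `SL₂(ℤ)` and the diagonal matrix `diag(m, 1)`.  Then the intersection `H_m ∩ SL₂(ℝ)` is
dense in `SL₂(ℝ)`; that is, the set of elements of `SL₂(ℝ)` that belong to `H_m` is dense in
`SL₂(ℝ)` for its topology as a subset of the `2×2` real matrices. -/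
theorem Hm_inter_SL2_dense (m : ℕ) (hm : 2 ≤ m) :
    Dense {A : {B : Matrix (Fin 2) (Fin 2) ℝ // B.det = 1} |
      ∃ g ∈ Hm m hm,
        ((g : GL (Fin 2) ℝ) : Matrix (Fin 2) (Fin 2) ℝ) = (A : Matrix (Fin 2) (Fin 2) ℝ)} := by
  have hset : {A : SL2 | ∃ g ∈ Hm m hm,
      ((g : GL (Fin 2) ℝ) : Matrix (Fin 2) (Fin 2) ℝ) = (A : Matrix (Fin 2) (Fin 2) ℝ)} =
      ((Gam m hm : Set SL2)) := by
    ext A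
    constructor
    · rintro ⟨g, hg, hgA⟩
      have : g = Matrix.SpecialLinearGroup.toGL A := Units.ext hgA
      rw [this] at hg
      exact hg
    · intro hA
      exact ⟨Matrix.SpecialLinearGroup.toGL A, hA, rfl⟩
  show Dense {A : SL2 | ∃ g ∈ Hm m hm,
      ((g : GL (Fin 2) ℝ) : Matrix (Fin 2) (Fin 2) ℝ) = (A : Matrix (Fin 2) (Fin 2) ℝ)}
  rw [hset]
  exact gam_dense m hm
end

section
/- Let m ≥ 2 be an integer and let H_m be the subgroup of GL₂(ℝ) generated by the image of SL₂(ℤ) and the diagonal matrix diag(m, 1). Then H_m contains every matrix A ∈ SL₂(ℝ) all of whose entries lie in the subring ℤ[1/m] of ℝ; that is, H_m contains SL₂(ℤ[1/m]): every 2×2 real matrix of determinant 1 of the form m^{−k}·B with k ≥ 0 an integer and B a matrix with integer entries belongs to H_m. -/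
open Matrix

lemma key_identity (μ p q r : ℝ) (hμ : μ ≠ 0) (hpq : p * q = -(μ^2)) :
    μ⁻¹ • !![0,p;q,r] =
      !![0,1;-1,0] * !![1,-q/μ;0,1] * !![1,0;-(p/μ),1] * !![1,-q/μ;0,1] * !![0,-1;1,0]
        * !![1, -(p*r)/μ^2; 0,1] := by
  ext i j
  fin_cases i <;> fin_cases j
  · simp [Matrix.mul_apply, Fin.sum_univ_two, Matrix.smul_apply]
    field_simp
    linear_combination (-1 : ℝ) * hpq
  · simp [Matrix.mul_apply, Fin.sum_univ_two, Matrix.smul_apply]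
    field_simp
    linear_combination (p*r) * hpq
  · simp [Matrix.mul_apply, Fin.sum_univ_two, Matrix.smul_apply]
    field_simp
    linear_combination (-q) * hpq
  · simp [Matrix.mul_apply, Fin.sum_univ_two, Matrix.smul_apply]
    field_simp
    linear_combination (r*(p*q+μ^2) - μ^3) * hpq

section Aux

variable (m : ℕ) (hm : 2 ≤ m)

/-- The set of real matrices realized by elements of `Hm`. -/
def Sm : Set (Matrix (Fin 2) (Fin 2) ℝ) :=
  {X | ∃ g ∈ Hm m hm, ((g : GL (Fin 2) ℝ) : Matrix (Fin 2) (Fin 2) ℝ) = X}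

variable {m hm}

lemma Sm.mul {X Y : Matrix (Fin 2) (Fin 2) ℝ} (hX : X ∈ Sm m hm) (hY : Y ∈ Sm m hm) :
    X * Y ∈ Sm m hm := by
  obtain ⟨g, hg, rfl⟩ := hX
  obtain ⟨h, hh, rfl⟩ := hY
  exact ⟨g * h, mul_mem hg hh, rfl⟩

lemma Sm.one : (1 : Matrix (Fin 2) (Fin 2) ℝ) ∈ Sm m hm :=
  ⟨1, one_mem _, rfl⟩

lemma Sm.inv {X Y : Matrix (Fin 2) (Fin 2) ℝ} (hX : X ∈ Sm m hm) (hXY : Y * X = 1) :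
    Y ∈ Sm m hm := by
  obtain ⟨g, hg, rfl⟩ := hX
  refine ⟨g⁻¹, inv_mem hg, ?_⟩
  have h1 : (g : Matrix (Fin 2) (Fin 2) ℝ) * ((g⁻¹ : GL (Fin 2) ℝ) : Matrix (Fin 2) (Fin 2) ℝ)
      = 1 := by
    rw [← Matrix.GeneralLinearGroup.coe_mul, mul_inv_cancel]; rfl
  calc ((g⁻¹ : GL (Fin 2) ℝ) : Matrix (Fin 2) (Fin 2) ℝ)
      = 1 * ((g⁻¹ : GL (Fin 2) ℝ) : Matrix (Fin 2) (Fin 2) ℝ) := (one_mul _).symm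
    _ = (Y * g) * ((g⁻¹ : GL (Fin 2) ℝ) : Matrix (Fin 2) (Fin 2) ℝ) := by rw [hXY]
    _ = Y * ((g : Matrix (Fin 2) (Fin 2) ℝ) *
          ((g⁻¹ : GL (Fin 2) ℝ) : Matrix (Fin 2) (Fin 2) ℝ)) := by rw [mul_assoc]
    _ = Y := by rw [h1, mul_one]

lemma Sm.sl {N : Matrix (Fin 2) (Fin 2) ℤ} (h : N.det = 1) :
    N.map (Int.cast : ℤ → ℝ) ∈ Sm m hm := by
  refine ⟨SpecialLinearGroup.toGL
    (SpecialLinearGroup.map (Int.castRingHom ℝ) ⟨N, h⟩), ?_, rfl⟩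
  exact Subgroup.subset_closure (Or.inl ⟨⟨N, h⟩, rfl⟩)

lemma Sm.sl' (a b c d : ℤ) (h : a * d - b * c = 1) :
    !![(a:ℝ), (b:ℝ); (c:ℝ), (d:ℝ)] ∈ Sm m hm := by
  have h' : (!![a, b; c, d]).det = 1 := by
    simpa [Matrix.det_fin_two] using h
  have h2 := Sm.sl (m := m) (hm := hm) h'
  have h3 : (!![a, b; c, d]).map (Int.cast : ℤ → ℝ) = !![(a:ℝ), (b:ℝ); (c:ℝ), (d:ℝ)] := by
    ext i j; fin_cases i <;> fin_cases j <;> simp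
  rwa [h3] at h2

lemma Sm.diag : (Matrix.diagonal ![(m : ℝ), 1]) ∈ Sm m hm :=
  ⟨diagm m hm, Subgroup.subset_closure (Or.inr rfl), rfl⟩

lemma Sm.diag' : !![(m:ℝ), 0; 0, 1] ∈ Sm m hm := by
  have h := Sm.diag (m := m) (hm := hm)
  have h2 : Matrix.diagonal ![(m : ℝ), 1] = !![(m:ℝ), 0; 0, 1] := by
    ext i j; fin_cases i <;> fin_cases j <;> simp [Matrix.diagonal]
  rwa [h2] at h

lemma Sm.diagpow (j : ℕ) : !![(m:ℝ)^j, 0; 0, 1] ∈ Sm m hm := by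
  induction j with
  | zero =>
      have h2 : !![(m:ℝ)^0, 0; 0, 1] = 1 := by
        ext i j; fin_cases i <;> fin_cases j <;> simp [Matrix.one_apply]
      rw [h2]; exact Sm.one
  | succ n ih =>
      have h2 : !![(m:ℝ)^(n+1), 0; 0, 1] = !![(m:ℝ)^n, 0; 0, 1] * !![(m:ℝ), 0; 0, 1] := by
        ext i j; fin_cases i <;> fin_cases j <;>
          simp [Matrix.mul_apply, Fin.sum_univ_two, pow_succ]
      rw [h2]; exact Sm.mul ih Sm.diag'

lemma Sm.diagpow_inv (j : ℕ) : !![((m:ℝ)^j)⁻¹, 0; 0, 1] ∈ Sm m hm := by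
  have hm0 : (m:ℝ)^j ≠ 0 := by
    have : (m:ℝ) ≠ 0 := Nat.cast_ne_zero.mpr (by omega)
    positivity
  refine Sm.inv (Sm.diagpow j) ?_
  ext i j'; fin_cases i <;> fin_cases j' <;>
    simp [Matrix.mul_apply, Fin.sum_univ_two, Matrix.one_apply, inv_mul_cancel₀ hm0]

lemma Sm.E12 (x : ℝ) (n : ℤ) (j : ℕ) (hx : x = (n:ℝ) / (m:ℝ)^j) :
    !![1, x; 0, 1] ∈ Sm m hm := by
  have hm0 : (m:ℝ)^j ≠ 0 := by
    have : (m:ℝ) ≠ 0 := Nat.cast_ne_zero.mpr (by omega)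
    positivity
  have h2 : !![1, x; 0, 1] =
      !![((m:ℝ)^j)⁻¹, 0; 0, 1] * !![1, (n:ℝ); 0, 1] * !![(m:ℝ)^j, 0; 0, 1] := by
    subst hx
    ext i j'; fin_cases i <;> fin_cases j' <;>
      simp [Matrix.mul_apply, Fin.sum_univ_two, inv_mul_cancel₀ hm0] <;> field_simp
  rw [h2]
  exact Sm.mul (Sm.mul (Sm.diagpow_inv j) (by simpa using Sm.sl' (m := m) (hm := hm) 1 n 0 1 (by ring))) (Sm.diagpow j)

lemma Sm.E21 (x : ℝ) (n : ℤ) (j : ℕ) (hx : x = (n:ℝ) / (m:ℝ)^j) :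
    !![1, 0; x, 1] ∈ Sm m hm := by
  have h2 : !![1, 0; x, 1] = !![(0:ℝ),-1;1,0] * !![1, -x; 0, 1] * !![(0:ℝ),1;-1,0] := by
    ext i j'; fin_cases i <;> fin_cases j' <;>
      simp [Matrix.mul_apply, Fin.sum_univ_two]
  have he : -x = ((-n : ℤ) : ℝ) / (m:ℝ)^j := by push_cast; rw [hx]; ring
  have hJ : !![(0:ℝ),-1;1,0] ∈ Sm m hm := by
    have := Sm.sl' (m := m) (hm := hm) 0 (-1) 1 0 (by ring)
    simpa using this
  have hJ' : !![(0:ℝ),1;-1,0] ∈ Sm m hm := by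
    have := Sm.sl' (m := m) (hm := hm) 0 1 (-1) 0 (by ring)
    simpa using this
  rw [h2]
  exact Sm.mul (Sm.mul hJ (Sm.E12 (-x) (-n) j he)) hJ'

end Aux

/-- Let `m ≥ 2` be an integer and let `H_m` be the subgroup of `GL₂(ℝ)` generated by the image
of `SL₂(ℤ)` and the diagonal matrix `diag(m, 1)`.  Then `H_m` contains every matrix
`A ∈ SL₂(ℝ)` all of whose entries lie in the subring `ℤ[1/m]` of `ℝ`; that is, `H_m` contains
`SL₂(ℤ[1/m])`: every `2×2` real matrix of determinant `1` of the form `m^{−k}·B` with `k ≥ 0`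
an integer and `B` a matrix with integer entries belongs to `H_m`. -/
theorem SL2_of_Z_inv_m_subset_Hm (m : ℕ) (hm : 2 ≤ m)
    (A : Matrix (Fin 2) (Fin 2) ℝ) (hdet : A.det = 1)
    (hA : ∃ (k : ℕ) (B : Matrix (Fin 2) (Fin 2) ℤ),
      A = ((m : ℝ) ^ k)⁻¹ • B.map (Int.cast : ℤ → ℝ)) :
    ∃ g ∈ Hm m hm, ((g : GL (Fin 2) ℝ) : Matrix (Fin 2) (Fin 2) ℝ) = A := by
  obtain ⟨k, B, hAeq⟩ := hA
  have hmR : (m:ℝ) ≠ 0 := Nat.cast_ne_zero.mpr (by omega)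
  set μ : ℝ := (m:ℝ)^k with hμdef
  have hμ : μ ≠ 0 := by positivity
  -- determinant of B
  have hdetB : B.det = (m:ℤ)^(2*k) := by
    have h1 : ((μ)⁻¹)^2 * (B.map (Int.cast : ℤ → ℝ)).det = 1 := by
      rw [← hdet, hAeq, Matrix.det_smul]
      norm_num [Fintype.card_fin]
    have h2 : (B.map (Int.cast : ℤ → ℝ)).det = ((B.det : ℤ) : ℝ) := by
      rw [Matrix.det_fin_two, Matrix.det_fin_two]
      simp [Matrix.map_apply]
    rw [h2] at h1
    have h3 : ((B.det : ℤ) : ℝ) = μ^2 := by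
      field_simp at h1
      linarith [h1]
    have h4 : ((B.det : ℤ) : ℝ) = (((m:ℤ)^(2*k) : ℤ) : ℝ) := by
      rw [h3, hμdef]
      push_cast
      rw [← pow_mul, mul_comm]
    exact_mod_cast h4
  have hdetBne : B.det ≠ 0 := by
    rw [hdetB]
    positivity
  -- first column of B is nonzero
  have hcol : B 0 0 ≠ 0 ∨ B 1 0 ≠ 0 := by
    by_contra h
    push_neg at h
    apply hdetBne
    rw [Matrix.det_fin_two, h.1, h.2]
    ring
  -- gcd and Bezout
  set g : ℕ := Int.gcd (B 0 0) (B 1 0) with hgdef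
  have hgpos : 0 < g := by
    rcases hcol with h | h
    · exact Int.gcd_pos_of_ne_zero_left _ h
    · exact Int.gcd_pos_of_ne_zero_right _ h
  set a' : ℤ := B 0 0 / (g:ℤ) with ha'def
  set c' : ℤ := B 1 0 / (g:ℤ) with hc'def
  have ha : (g:ℤ) * a' = B 0 0 := Int.mul_ediv_cancel' (Int.gcd_dvd_left (B 0 0) (B 1 0))
  have hc : (g:ℤ) * c' = B 1 0 := Int.mul_ediv_cancel' (Int.gcd_dvd_right (B 0 0) (B 1 0))
  have hcop : Int.gcd a' c' = 1 := Int.gcd_div_gcd_div_gcd hgpos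
  set x : ℤ := Int.gcdA a' c' with hxdef
  set y : ℤ := Int.gcdB a' c' with hydef
  have hbez : 1 = a' * x + c' * y := by
    have := Int.gcd_eq_gcd_ab a' c'
    rw [hcop] at this
    exact_mod_cast this
  set U : Matrix (Fin 2) (Fin 2) ℤ := !![c', -a'; x, y] with hUdef
  have hdetU : U.det = 1 := by
    rw [hUdef, Matrix.det_fin_two_of]
    linear_combination -hbez
  set M : Matrix (Fin 2) (Fin 2) ℤ := U * B with hMdef
  have hM00 : M 0 0 = 0 := by
    rw [hMdef]
    have : (U * B) 0 0 = U 0 0 * B 0 0 + U 0 1 * B 1 0 := by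
      simp [Matrix.mul_apply, Fin.sum_univ_two]
    rw [this, ← ha, ← hc]
    simp [hUdef]
    ring
  have hdetM : M.det = (m:ℤ)^(2*k) := by
    rw [hMdef, Matrix.det_mul, hdetU, one_mul, hdetB]
  have hpq : M 0 1 * M 1 0 = -((m:ℤ)^(2*k)) := by
    have := Matrix.det_fin_two M
    rw [hM00, hdetM] at this
    linarith [this]
  -- B = U⁻¹ * M with U⁻¹ = adjugate U
  set Uinv : Matrix (Fin 2) (Fin 2) ℤ := U.adjugate with hUinvdef
  have hdetUinv : Uinv.det = 1 := by
    rw [hUinvdef, Matrix.det_adjugate, hdetU]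
    norm_num
  have hUinvU : Uinv * U = 1 := by
    rw [hUinvdef, Matrix.adjugate_mul, hdetU, one_smul]
  have hB : B = Uinv * M := by
    rw [hMdef, ← mul_assoc, hUinvU, one_mul]
  -- the real matrix form of M
  set p : ℝ := ((M 0 1 : ℤ) : ℝ) with hpdef
  set q : ℝ := ((M 1 0 : ℤ) : ℝ) with hqdef
  set r : ℝ := ((M 1 1 : ℤ) : ℝ) with hrdef
  have hMmap : M.map (Int.cast : ℤ → ℝ) = !![0, p; q, r] := by
    ext i j; fin_cases i <;> fin_cases j <;> simp [hM00, hpdef, hqdef, hrdef]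
  have hpq' : p * q = -(μ^2) := by
    rw [hpdef, hqdef, hμdef, ← pow_mul, mul_comm k 2]
    exact_mod_cast hpq
  -- main membership
  have hmain : μ⁻¹ • (M.map (Int.cast : ℤ → ℝ)) ∈ Sm m hm := by
    rw [hMmap, key_identity μ p q r hμ hpq']
    have hμ2 : μ^2 = (m:ℝ)^(2*k) := by rw [hμdef, ← pow_mul, mul_comm]
    refine Sm.mul (Sm.mul (Sm.mul (Sm.mul (Sm.mul ?_ ?_) ?_) ?_) ?_) ?_
    · have := Sm.sl' (m := m) (hm := hm) 0 1 (-1) 0 (by ring)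
      simpa using this
    · exact Sm.E12 _ (-(M 1 0)) k (by rw [hqdef, hμdef]; push_cast; ring)
    · exact Sm.E21 _ (-(M 0 1)) k (by rw [hpdef, hμdef]; push_cast; ring)
    · exact Sm.E12 _ (-(M 1 0)) k (by rw [hqdef, hμdef]; push_cast; ring)
    · have := Sm.sl' (m := m) (hm := hm) 0 (-1) 1 0 (by ring)
      simpa using this
    · refine Sm.E12 _ (-(M 0 1 * M 1 1)) (2*k) ?_
      rw [hpdef, hrdef, hμ2]
      push_cast
      ring
  have hfinal : A ∈ Sm m hm := by
    have hsplit : A = (Uinv.map (Int.cast : ℤ → ℝ)) * (μ⁻¹ • (M.map (Int.cast : ℤ → ℝ))) := by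
      have hmm : ((Uinv * M).map (Int.cast : ℤ → ℝ)) =
          Uinv.map (Int.cast : ℤ → ℝ) * M.map (Int.cast : ℤ → ℝ) := by
        ext i j
        simp [Matrix.map_apply, Matrix.mul_apply, Fin.sum_univ_two]
      rw [hAeq, hB, hmm, mul_smul_comm]
    rw [hsplit]
    exact Sm.mul (Sm.sl hdetUinv) hmain
  exact hfinal
end

section
/- Let m ≥ 2 be an integer and let H_m be the subgroup of GL₂(ℝ) generated by the image of SL₂(ℤ) and the diagonal matrix diag(m, 1). Every element of H_m has positive determinant, so H_m acts on the complex upper half-plane ℍ by fractional linear transformations. For every τ ∈ ℍ, the orbit H_m · τ = { g·τ : g ∈ H_m } is dense in ℍ. -/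
open Matrix

set_option synthInstance.maxHeartbeats 1000000
set_option maxHeartbeats 1000000

namespace HmAux

open UpperHalfPlane Filter
open scoped MatrixGroups Topology

/-- Upper-triangular unipotent (translation) matrices in `GL₂(ℝ)`. -/
noncomputable def Tgl (t : ℝ) : GL (Fin 2) ℝ :=
  ⟨!![1, t; 0, 1], !![1, -t; 0, 1],
    by ext i j; fin_cases i <;> fin_cases j <;> simp [Matrix.mul_apply, Fin.sum_univ_two],
    by ext i j; fin_cases i <;> fin_cases j <;> simp [Matrix.mul_apply, Fin.sum_univ_two]⟩

/-- Lower-triangular unipotent matrices in `GL₂(ℝ)`. -/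
noncomputable def Lgl (c : ℝ) : GL (Fin 2) ℝ :=
  ⟨!![1, 0; c, 1], !![1, 0; -c, 1],
    by ext i j; fin_cases i <;> fin_cases j <;> simp [Matrix.mul_apply, Fin.sum_univ_two],
    by ext i j; fin_cases i <;> fin_cases j <;> simp [Matrix.mul_apply, Fin.sum_univ_two]⟩

lemma Tgl_pos (t : ℝ) : Tgl t ∈ Matrix.GLPos (Fin 2) ℝ := by
  rw [Matrix.mem_glpos]
  show (0:ℝ) < (Matrix.GeneralLinearGroup.det (Tgl t) : ℝ)
  rw [Matrix.GeneralLinearGroup.val_det_apply]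
  show (0:ℝ) < (!![1, t; 0, 1] : Matrix (Fin 2) (Fin 2) ℝ).det
  simp [Matrix.det_fin_two_of]

lemma Lgl_pos (c : ℝ) : Lgl c ∈ Matrix.GLPos (Fin 2) ℝ := by
  rw [Matrix.mem_glpos]
  show (0:ℝ) < (Matrix.GeneralLinearGroup.det (Lgl c) : ℝ)
  rw [Matrix.GeneralLinearGroup.val_det_apply]
  show (0:ℝ) < (!![1, 0; c, 1] : Matrix (Fin 2) (Fin 2) ℝ).det
  simp [Matrix.det_fin_two_of]

lemma Tgl_smul (t : ℝ) (z : ℍ) :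
    (((⟨Tgl t, Tgl_pos t⟩ : Matrix.GLPos (Fin 2) ℝ) • z : ℍ) : ℂ) = (t : ℂ) + z := by
  show ((Tgl t • z : ℍ) : ℂ) = _
  rw [UpperHalfPlane.coe_smul_of_det_pos (Tgl_pos t)]
  simp [UpperHalfPlane.num, UpperHalfPlane.denom, Tgl]
  ring

lemma Lgl_smul (c : ℝ) (z : ℍ) :
    (((⟨Lgl c, Lgl_pos c⟩ : Matrix.GLPos (Fin 2) ℝ) • z : ℍ) : ℂ) = (z : ℂ) / (c * z + 1) := by
  show ((Lgl c • z : ℍ) : ℂ) = _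
  rw [UpperHalfPlane.coe_smul_of_det_pos (Lgl_pos c)]
  simp [UpperHalfPlane.num, UpperHalfPlane.denom, Lgl]

lemma sl_mem (m : ℕ) (hm : 2 ≤ m) (A : SpecialLinearGroup (Fin 2) ℤ) :
    SpecialLinearGroup.toGL (SpecialLinearGroup.map (Int.castRingHom ℝ) A) ∈ Hm m hm :=
  Subgroup.subset_closure (Or.inl ⟨A, rfl⟩)

lemma diagm_pow_coe (m : ℕ) (hm : 2 ≤ m) (k : ℕ) :
    (((diagm m hm) ^ k : GL (Fin 2) ℝ) : Matrix (Fin 2) (Fin 2) ℝ)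
      = Matrix.diagonal ![(m:ℝ)^k, 1] := by
  have h : (((diagm m hm) ^ k : GL (Fin 2) ℝ) : Matrix (Fin 2) (Fin 2) ℝ)
      = ((diagm m hm : GL (Fin 2) ℝ) : Matrix (Fin 2) (Fin 2) ℝ) ^ k :=
    Units.val_pow_eq_pow_val _ _
  rw [h]
  show (Matrix.diagonal ![(m:ℝ), 1]) ^ k = _
  rw [Matrix.diagonal_pow]
  ext i j
  fin_cases i <;> fin_cases j <;> simp [Matrix.diagonal, Pi.pow_apply]

lemma Tgl_mem (m : ℕ) (hm : 2 ≤ m) (n : ℤ) (k : ℕ) :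
    Tgl ((n : ℝ) / (m:ℝ)^k) ∈ Hm m hm := by
  have hd : diagm m hm ∈ Hm m hm := Subgroup.subset_closure (Or.inr rfl)
  have hdk : (diagm m hm)^k ∈ Hm m hm := pow_mem hd k
  have hT : SpecialLinearGroup.toGL
      (SpecialLinearGroup.map (Int.castRingHom ℝ) (ModularGroup.T ^ n)) ∈ Hm m hm :=
    sl_mem m hm _
  have key : (diagm m hm)^k * Tgl ((n : ℝ) / (m:ℝ)^k)
      = SpecialLinearGroup.toGL
          (SpecialLinearGroup.map (Int.castRingHom ℝ) (ModularGroup.T ^ n)) * (diagm m hm)^k := by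
    apply Units.ext
    rw [Units.val_mul, Units.val_mul, diagm_pow_coe]
    have hTn : ((SpecialLinearGroup.toGL
        (SpecialLinearGroup.map (Int.castRingHom ℝ) (ModularGroup.T ^ n)) : GL (Fin 2) ℝ) :
        Matrix (Fin 2) (Fin 2) ℝ) = !![1, (n:ℝ); 0, 1] := by
      show ((ModularGroup.T ^ n : SpecialLinearGroup (Fin 2) ℤ) :
        Matrix (Fin 2) (Fin 2) ℤ).map Int.cast = _
      rw [ModularGroup.coe_T_zpow]
      ext i j; fin_cases i <;> fin_cases j <;> simp
    rw [hTn]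
    show Matrix.diagonal ![(m:ℝ)^k, 1] * !![1, (n : ℝ) / (m:ℝ)^k; 0, 1]
        = !![1, (n:ℝ); 0, 1] * Matrix.diagonal ![(m:ℝ)^k, 1]
    have hm0 : ((m:ℝ)^k) ≠ 0 := by positivity
    ext i j
    fin_cases i <;> fin_cases j <;>
      simp [Matrix.mul_apply, Fin.sum_univ_two, Matrix.diagonal] <;> field_simp
  have h2 : Tgl ((n : ℝ) / (m:ℝ)^k)
      = ((diagm m hm)^k)⁻¹ * (SpecialLinearGroup.toGL
          (SpecialLinearGroup.map (Int.castRingHom ℝ) (ModularGroup.T ^ n)) * (diagm m hm)^k) := by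
    rw [eq_inv_mul_iff_mul_eq]; exact key
  rw [h2]
  exact mul_mem (inv_mem hdk) (mul_mem hT hdk)

lemma Lgl_mem (m : ℕ) (hm : 2 ≤ m) (n : ℤ) (k : ℕ) :
    Lgl ((n : ℝ) / (m:ℝ)^k) ∈ Hm m hm := by
  have hS : SpecialLinearGroup.toGL
      (SpecialLinearGroup.map (Int.castRingHom ℝ) ModularGroup.S) ∈ Hm m hm := sl_mem m hm _
  have hSc : ((SpecialLinearGroup.toGL
      (SpecialLinearGroup.map (Int.castRingHom ℝ) ModularGroup.S) : GL (Fin 2) ℝ) :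
      Matrix (Fin 2) (Fin 2) ℝ) = !![0, -1; 1, 0] := by
    show ((ModularGroup.S : SpecialLinearGroup (Fin 2) ℤ) :
      Matrix (Fin 2) (Fin 2) ℤ).map Int.cast = _
    rw [ModularGroup.coe_S]
    ext i j; fin_cases i <;> fin_cases j <;> simp
  have hT : Tgl (((-n : ℤ) : ℝ) / (m:ℝ)^k) ∈ Hm m hm := Tgl_mem m hm (-n) k
  have key : Lgl ((n : ℝ) / (m:ℝ)^k) * SpecialLinearGroup.toGL
      (SpecialLinearGroup.map (Int.castRingHom ℝ) ModularGroup.S)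
      = SpecialLinearGroup.toGL (SpecialLinearGroup.map (Int.castRingHom ℝ) ModularGroup.S)
          * Tgl (((-n : ℤ) : ℝ) / (m:ℝ)^k) := by
    apply Units.ext
    rw [Units.val_mul, Units.val_mul, hSc]
    show (!![1, 0; (n : ℝ) / (m:ℝ)^k, 1] : Matrix (Fin 2) (Fin 2) ℝ) * !![0, -1; 1, 0]
        = !![0, -1; 1, 0] * !![1, ((-n : ℤ) : ℝ) / (m:ℝ)^k; 0, 1]
    ext i j
    fin_cases i <;> fin_cases j <;>
      simp [Matrix.mul_apply, Fin.sum_univ_two] <;> ring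
  have h2 : Lgl ((n : ℝ) / (m:ℝ)^k)
      = SpecialLinearGroup.toGL (SpecialLinearGroup.map (Int.castRingHom ℝ) ModularGroup.S)
          * Tgl (((-n : ℤ) : ℝ) / (m:ℝ)^k)
          * (SpecialLinearGroup.toGL
              (SpecialLinearGroup.map (Int.castRingHom ℝ) ModularGroup.S))⁻¹ := by
    rw [eq_mul_inv_iff_mul_eq]; exact key
  rw [h2]
  exact mul_mem (mul_mem hS hT) (inv_mem hS)

lemma Hm_le_GLPos (m : ℕ) (hm : 2 ≤ m) : Hm m hm ≤ Matrix.GLPos (Fin 2) ℝ := by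
  rw [Hm, Subgroup.closure_le]
  rintro g (⟨A, rfl⟩ | rfl)
  · rw [SetLike.mem_coe, Matrix.mem_glpos, Matrix.GeneralLinearGroup.val_det_apply]
    show (0:ℝ) < (((A : Matrix (Fin 2) (Fin 2) ℤ).map (Int.cast : ℤ → ℝ)).det)
    have : ((A : Matrix (Fin 2) (Fin 2) ℤ).map (Int.cast : ℤ → ℝ)).det
        = ((A : Matrix (Fin 2) (Fin 2) ℤ).det : ℝ) := by
      rw [Matrix.det_fin_two, Matrix.det_fin_two]
      simp only [Matrix.map_apply]
      push_cast
      ring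
    rw [this, A.2]
    norm_num
  · rw [SetLike.mem_coe, Matrix.mem_glpos, Matrix.GeneralLinearGroup.val_det_apply]
    show (0:ℝ) < (Matrix.diagonal ![(m:ℝ), 1]).det
    rw [Matrix.det_diagonal, Fin.prod_univ_two]
    have : (0:ℝ) < m := by positivity
    simpa using this
 
lemma prod_smul (a c b : ℝ) (τ : ℍ) :
    (((⟨Tgl a * (Lgl c * Tgl b),
          mul_mem (Tgl_pos a) (mul_mem (Lgl_pos c) (Tgl_pos b))⟩ :
        Matrix.GLPos (Fin 2) ℝ) • τ : ℍ) : ℂ)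
      = (a:ℂ) + ((b:ℂ) + τ) / ((c:ℂ) * ((b:ℂ) + τ) + 1) := by
  have h : (⟨Tgl a * (Lgl c * Tgl b),
          mul_mem (Tgl_pos a) (mul_mem (Lgl_pos c) (Tgl_pos b))⟩ : Matrix.GLPos (Fin 2) ℝ)
      = ⟨Tgl a, Tgl_pos a⟩ * (⟨Lgl c, Lgl_pos c⟩ * ⟨Tgl b, Tgl_pos b⟩) := rfl
  rw [h, mul_smul, mul_smul, Tgl_smul, Lgl_smul, Tgl_smul]

lemma denom_ne (c b : ℝ) (τ : ℍ) : (c:ℂ) * ((b:ℂ) + (τ:ℂ)) + 1 ≠ 0 := by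
  rcases eq_or_ne c 0 with rfl | hc
  · simp
  · intro h
    have him : ((c:ℂ) * ((b:ℂ) + (τ:ℂ)) + 1).im = c * τ.im := by
      simp [Complex.add_im, Complex.mul_im, UpperHalfPlane.coe_im]
    rw [h] at him
    have : c * τ.im = 0 := by simpa using him.symm
    rcases mul_eq_zero.1 this with h' | h'
    · exact hc h'
    · exact (τ.im_pos.ne' h')

lemma approx (m : ℕ) (hm : 2 ≤ m) (x : ℝ) :
    ∃ u : ℕ → ℝ, (∀ k, ∃ n : ℤ, u k = (n:ℝ) / (m:ℝ)^k) ∧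
      Filter.Tendsto u Filter.atTop (nhds x) := by
  have hm1 : (1:ℝ) < m := by exact_mod_cast lt_of_lt_of_le one_lt_two hm
  have hm0 : (0:ℝ) < m := lt_trans one_pos hm1
  refine ⟨fun k => (⌊x * (m:ℝ)^k⌋ : ℝ) / (m:ℝ)^k, fun k => ⟨⌊x * (m:ℝ)^k⌋, rfl⟩, ?_⟩
  rw [tendsto_iff_dist_tendsto_zero]
  apply squeeze_zero (fun n => dist_nonneg) (g := fun k => (1/(m:ℝ))^k)
  · intro k
    have hmk : (0:ℝ) < (m:ℝ)^k := by positivity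
    rw [Real.dist_eq]
    have heq : (⌊x * (m:ℝ)^k⌋ : ℝ) / (m:ℝ)^k - x
        = ((⌊x * (m:ℝ)^k⌋ : ℝ) - x * (m:ℝ)^k) / (m:ℝ)^k := by
      field_simp
    have hone : (1/(m:ℝ))^k = 1/(m:ℝ)^k := by rw [one_div, one_div, inv_pow]
    rw [heq, abs_div, abs_of_pos hmk, hone]
    gcongr
    rw [abs_le]
    constructor
    · have := Int.lt_floor_add_one (x * (m:ℝ)^k)
      linarith
    · have := Int.floor_le (x * (m:ℝ)^k)
      linarith
  · exact tendsto_pow_atTop_nhds_zero_of_lt_one (by positivity)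
      (by rw [div_lt_one hm0]; exact hm1)

lemma key_identity (x y x' y' s : ℝ) (hy : 0 < y) (hs : 0 < s) (h2 : s^2 = y*y') :
    ((x' - s : ℝ) : ℂ) + (((-s - x : ℝ) : ℂ) + ((x:ℝ) + (y:ℝ)*Complex.I)) /
      (((1/s : ℝ) : ℂ) * (((-s - x : ℝ):ℂ) + ((x:ℝ) + (y:ℝ)*Complex.I)) + 1)
      = (x':ℝ) + (y':ℝ)*Complex.I := by
  have h1 : ((-s - x : ℝ) : ℂ) + ((x:ℝ) + (y:ℝ)*Complex.I)
      = -(s:ℂ) + (y:ℝ)*Complex.I := by push_cast; ring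
  rw [h1]
  have hsne : (s:ℂ) ≠ 0 := by exact_mod_cast hs.ne'
  have hyne : (y:ℂ) ≠ 0 := by exact_mod_cast hy.ne'
  have hdenom : ((1/s : ℝ) : ℂ) * (-(s:ℂ) + (y:ℝ)*Complex.I) + 1 = ((y/s:ℝ):ℂ)*Complex.I := by
    push_cast; field_simp; ring
  rw [hdenom]
  have hIne : ((y/s:ℝ):ℂ)*Complex.I ≠ 0 := by
    push_cast
    simp [Complex.I_ne_zero, hsne, hyne, div_eq_zero_iff]
  have h2c : (s:ℂ)^2 = (y:ℝ)*(y':ℝ) := by exact_mod_cast congrArg (Complex.ofReal) h2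
  have hfrac : (-(s:ℂ) + (y:ℝ)*Complex.I) / (((y/s:ℝ):ℂ)*Complex.I)
      = (s:ℂ) + (y':ℝ)*Complex.I := by
    rw [div_eq_iff hIne]
    push_cast
    field_simp
    linear_combination (-(y:ℂ)*(y':ℝ)) * Complex.I_sq + (-(1:ℂ)) * h2c
  rw [hfrac]
  push_cast
  ring

end HmAux

open HmAux UpperHalfPlane Filter

/-- Let `m ≥ 2` be an integer and let `H_m` be the subgroup of `GL₂(ℝ)` generated by the image
of `SL₂(ℤ)` and the diagonal matrix `diag(m, 1)`.  Every element of `H_m` has positive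
determinant, so `H_m` acts on the complex upper half-plane `ℍ` by fractional linear
transformations.  For every `τ ∈ ℍ`, the orbit `H_m · τ` is dense in `ℍ`. -/
theorem Hm_orbit_dense_in_upperHalfPlane (m : ℕ) (hm : 2 ≤ m) :
    (∀ g : GL (Fin 2) ℝ, g ∈ Hm m hm → 0 < ((g : Matrix (Fin 2) (Fin 2) ℝ)).det) ∧
    ∀ τ : UpperHalfPlane,
      Dense {τ' : UpperHalfPlane | ∃ (g : GL (Fin 2) ℝ) (_ : g ∈ Hm m hm)
        (hg : g ∈ Matrix.GLPos (Fin 2) ℝ),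
        (⟨g, hg⟩ : Matrix.GLPos (Fin 2) ℝ) • τ = τ'} := by
  constructor
  · intro g hg
    have hpos := Hm_le_GLPos m hm hg
    have h := (Matrix.mem_glpos g).1 hpos
    rwa [Matrix.GeneralLinearGroup.val_det_apply] at h
  · intro τ
    set O : Set ℍ := {τ' : UpperHalfPlane | ∃ (g : GL (Fin 2) ℝ) (_ : g ∈ Hm m hm)
        (hg : g ∈ Matrix.GLPos (Fin 2) ℝ),
        (⟨g, hg⟩ : Matrix.GLPos (Fin 2) ℝ) • τ = τ'} with hO
    intro w
    rw [UpperHalfPlane.isEmbedding_coe.toIsInducing.closure_eq_preimage_closure_image,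
      Set.mem_preimage]
    -- parameters
    set y : ℝ := τ.im with hy
    set y' : ℝ := w.im with hy'
    set s : ℝ := Real.sqrt (y * y') with hsdef
    have hypos : 0 < y := τ.im_pos
    have hy'pos : 0 < y' := w.im_pos
    have hs : 0 < s := Real.sqrt_pos.2 (mul_pos hypos hy'pos)
    have hs2 : s^2 = y * y' := Real.sq_sqrt (mul_pos hypos hy'pos).le
    set a₀ : ℝ := w.re - s with ha₀
    set c₀ : ℝ := 1/s with hc₀
    set b₀ : ℝ := -s - τ.re with hb₀
    obtain ⟨ua, hua, hta⟩ := approx m hm a₀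
    obtain ⟨uc, huc, htc⟩ := approx m hm c₀
    obtain ⟨ub, hub, htb⟩ := approx m hm b₀
    -- the limit identity
    have hτc : ((τ.re : ℝ) : ℂ) + ((τ.im : ℝ) : ℂ) * Complex.I = (τ : ℂ) := by
      rw [← UpperHalfPlane.coe_re τ, ← UpperHalfPlane.coe_im τ]
      exact Complex.re_add_im _
    have hwc : ((w.re : ℝ) : ℂ) + ((w.im : ℝ) : ℂ) * Complex.I = (w : ℂ) := by
      rw [← UpperHalfPlane.coe_re w, ← UpperHalfPlane.coe_im w]
      exact Complex.re_add_im _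
    have hlim : (a₀:ℂ) + ((b₀:ℂ) + (τ:ℂ)) / ((c₀:ℂ) * ((b₀:ℂ) + (τ:ℂ)) + 1) = (w : ℂ) := by
      rw [← hτc, ← hwc]
      exact key_identity τ.re y w.re y' s hypos hs hs2
    -- sequence of orbit points
    have htend : Tendsto (fun n : ℕ =>
        (ua n : ℂ) + ((ub n : ℂ) + (τ:ℂ)) / ((uc n : ℂ) * ((ub n : ℂ) + (τ:ℂ)) + 1))
        atTop (nhds ((w : ℍ) : ℂ)) := by
      rw [← hlim]
      have hca : Tendsto (fun n => ((ua n : ℝ) : ℂ)) atTop (nhds (a₀:ℂ)) :=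
        (Complex.continuous_ofReal.tendsto _).comp hta
      have hcc : Tendsto (fun n => ((uc n : ℝ) : ℂ)) atTop (nhds (c₀:ℂ)) :=
        (Complex.continuous_ofReal.tendsto _).comp htc
      have hcb : Tendsto (fun n => ((ub n : ℝ) : ℂ)) atTop (nhds (b₀:ℂ)) :=
        (Complex.continuous_ofReal.tendsto _).comp htb
      have hnum : Tendsto (fun n => ((ub n : ℝ) : ℂ) + (τ:ℂ)) atTop (nhds ((b₀:ℂ) + (τ:ℂ))) :=
        hcb.add tendsto_const_nhds
      exact hca.add ((hnum).div ((hcc.mul hnum).add tendsto_const_nhds) (denom_ne c₀ b₀ τ))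
    refine mem_closure_of_tendsto htend (Filter.Eventually.of_forall (fun n => ?_))
    obtain ⟨na, hna⟩ := hua n
    obtain ⟨nc, hnc⟩ := huc n
    obtain ⟨nb, hnb⟩ := hub n
    have hmem : Tgl (ua n) * (Lgl (uc n) * Tgl (ub n)) ∈ Hm m hm := by
      rw [hna, hnc, hnb]
      exact mul_mem (Tgl_mem m hm na n) (mul_mem (Lgl_mem m hm nc n) (Tgl_mem m hm nb n))
    refine ⟨(⟨Tgl (ua n) * (Lgl (uc n) * Tgl (ub n)),
        mul_mem (Tgl_pos (ua n)) (mul_mem (Lgl_pos (uc n)) (Tgl_pos (ub n)))⟩ :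
          Matrix.GLPos (Fin 2) ℝ) • τ, ?_, ?_⟩
    · exact ⟨_, hmem, _, rfl⟩
    · exact prod_smul (ua n) (uc n) (ub n) τ
end
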